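/- arXiv:1504.01904 — 6 statements merged into one kernel-verified Lean document; each statement's English description precedes it below -/
import Mathlib

section
/- Fix an integer m ≥ 2, set N = m+1 and h = 1/N, and let ε > 0 and b₀ > 0 be reals. Let A be the m² × m² symmetric positive definite matrix defined by A(r,r) = 4ε² + h²b₀ for all r, A(r,c) = −ε² if |r−c| = m or if (|r−c| = 1 and ⌈r/m⌉ = ⌈c/m⌉), and A(r,c) = 0 otherwise, and let L be its Cholesky factor. Then the number of pairs (r,c) with 1 ≤ c ≤ r ≤ m² and L(r,c) ≠ 0 is exactly m³ + m − 1. -/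
/-- The m² × m² symmetrized 5-point finite-difference matrix for
−ε²Δu + b₀u on a uniform mesh of width h = 1/(m+1) on the unit square.
Rows/columns r,c : Fin (m^2) encode the 1-based indices r+1, c+1;
the condition ⌈(r+1)/m⌉ = ⌈(c+1)/m⌉ is equivalent to r/m = c/m (Nat division). -/
noncomputable def fdMatrix (m : ℕ) (ε b₀ : ℝ) :
    Matrix (Fin (m ^ 2)) (Fin (m ^ 2)) ℝ := fun r c =>
  if r = c then 4 * ε ^ 2 + (1 / (m + 1) : ℝ) ^ 2 * b₀
  else if (r : ℕ) + m = (c : ℕ) ∨ (c : ℕ) + m = (r : ℕ) then -ε ^ 2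
  else if ((r : ℕ) + 1 = (c : ℕ) ∨ (c : ℕ) + 1 = (r : ℕ))
      ∧ (r : ℕ) / m = (c : ℕ) / m then -ε ^ 2
  else 0

/- STATEMENT 1: the Cholesky factor L of fdMatrix has exactly m³ + m − 1
   nonzero entries on or below the diagonal. -/
theorem stmt_1 (m : ℕ) (hm : 2 ≤ m) (ε b₀ : ℝ) (hε : 0 < ε) (hb₀ : 0 < b₀)
    (L : Matrix (Fin (m ^ 2)) (Fin (m ^ 2)) ℝ)
    (hL_tri : ∀ i j : Fin (m ^ 2), i < j → L i j = 0)
    (hL_diag : ∀ i : Fin (m ^ 2), 0 < L i i)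
    (hL_fac : fdMatrix m ε b₀ = L * L.transpose) :
    {p : Fin (m ^ 2) × Fin (m ^ 2) | p.2 ≤ p.1 ∧ L p.1 p.2 ≠ 0}.ncard
      = m ^ 3 + m - 1 := by
  have hmn : m < m ^ 2 := by nlinarith
  -- the recurrence
  have hrec : ∀ r c : Fin (m ^ 2), c < r →
      fdMatrix m ε b₀ r c
        = (∑ k ∈ Finset.univ.filter (fun k => k < c), L r k * L c k)
          + L r c * L c c := by
    intro r c hcr
    have h1 : fdMatrix m ε b₀ r c = ∑ k : Fin (m ^ 2), L r k * L c k := by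
      rw [hL_fac]; simp [Matrix.mul_apply, Matrix.transpose_apply]
    have h3 : ∑ k ∈ Finset.univ.filter (fun k => ¬ k ≤ c), L r k * L c k = 0 := by
      apply Finset.sum_eq_zero
      intro k hk
      simp only [Finset.mem_filter, not_le] at hk
      rw [hL_tri c k hk.2, mul_zero]
    have h4 : Finset.univ.filter (fun k => k ≤ c)
        = insert c (Finset.univ.filter (fun k => k < c)) := by
      ext k
      simp only [Finset.mem_filter, Finset.mem_insert, Finset.mem_univ, true_and,
        Fin.ext_iff, Fin.le_def, Fin.lt_def]
      omega
    have h5 : (∑ k : Fin (m ^ 2), L r k * L c k)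
        = (∑ k ∈ Finset.univ.filter (fun k => k ≤ c), L r k * L c k)
          + ∑ k ∈ Finset.univ.filter (fun k => ¬ k ≤ c), L r k * L c k :=
      (Finset.sum_filter_add_sum_filter_not _ _ _).symm
    rw [h1, h5, h3, add_zero, h4,
      Finset.sum_insert (by simp [Finset.mem_filter])]
    ring
  -- off-diagonal value of the matrix
  have hA : ∀ r c : Fin (m ^ 2), c < r →
      fdMatrix m ε b₀ r c
        = if ((c : ℕ) + m = (r : ℕ)
            ∨ ((c : ℕ) + 1 = (r : ℕ) ∧ (r : ℕ) / m = (c : ℕ) / m))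
          then -ε ^ 2 else 0 := by
    intro r c hcr
    have hv : (c : ℕ) < (r : ℕ) := hcr
    have hne : r ≠ c := by
      intro h; rw [h] at hv; omega
    simp only [fdMatrix, if_neg hne]
    by_cases h1 : (c : ℕ) + m = (r : ℕ)
    · rw [if_pos (Or.inr h1), if_pos (Or.inl h1)]
    · rw [if_neg (by
        rintro (h | h)
        · omega
        · exact h1 h)]
      by_cases h2 : (c : ℕ) + 1 = (r : ℕ) ∧ (r : ℕ) / m = (c : ℕ) / m
      · rw [if_pos ⟨Or.inr h2.1, h2.2⟩, if_pos (Or.inr h2)]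
      · rw [if_neg (by
          rintro ⟨h3 | h3, h4⟩
          · omega
          · exact h2 ⟨h3, h4⟩), if_neg (by
          rintro (h | h)
          · exact h1 h
          · exact h2 h)]
  -- main induction: sign pattern of L
  have key : ∀ cv : ℕ, ∀ c r : Fin (m ^ 2), (c : ℕ) = cv → c < r →
      (((r : ℕ) - c ≤ m ∧ (m ≤ (r : ℕ) ∨ (r : ℕ) - c ≤ 1)) → L r c < 0) ∧
      (¬((r : ℕ) - c ≤ m ∧ (m ≤ (r : ℕ) ∨ (r : ℕ) - c ≤ 1)) → L r c = 0) := by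
    intro cv
    induction cv using Nat.strong_induction_on with
    | _ cv IH =>
      intro c r hcval hcr
      have hv : (c : ℕ) < (r : ℕ) := hcr
      -- consequences of IH
      have hnonpos : ∀ k i : Fin (m ^ 2), k < c → k < i → L i k ≤ 0 := by
        intro k i hkc hki
        rcases (IH (k : ℕ) (by omega) k i rfl hki) with ⟨hneg, hzero⟩
        by_cases hp : ((i : ℕ) - k ≤ m ∧ (m ≤ (i : ℕ) ∨ (i : ℕ) - k ≤ 1))
        · exact le_of_lt (hneg hp)
        · exact le_of_eq (hzero hp)
      have hSnonneg : ∀ k ∈ Finset.univ.filter (fun k => k < c),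
          0 ≤ L r k * L c k := by
        intro k hk
        simp only [Finset.mem_filter] at hk
        have h1 := hnonpos k r hk.2 (lt_trans hk.2 hcr)
        have h2 := hnonpos k c hk.2 hk.2
        have := mul_nonneg (neg_nonneg.mpr h1) (neg_nonneg.mpr h2)
        rwa [neg_mul_neg] at this
      have hrec' := hrec r c hcr
      rw [hA r c hcr] at hrec'
      constructor
      · -- pattern holds : L r c < 0
        rintro ⟨hp1, hp2⟩
        have hgoal : L r c * L c c < 0 := by
          by_cases hAcase : ((c : ℕ) + m = (r : ℕ)
              ∨ ((c : ℕ) + 1 = (r : ℕ) ∧ (r : ℕ) / m = (c : ℕ) / m))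
          · rw [if_pos hAcase] at hrec'
            have hS : 0 ≤ ∑ k ∈ Finset.univ.filter (fun k => k < c),
                L r k * L c k := Finset.sum_nonneg hSnonneg
            nlinarith [sq_nonneg ε, hε]
          · -- fill-in entry
            rw [if_neg hAcase] at hrec'
            -- show m ≤ r and 1 ≤ r - c ≤ m - 1 and 1 ≤ c
            have hrm : m ≤ (r : ℕ) := by
              by_contra hlt
              push_neg at hlt
              have h1 : (r : ℕ) - c ≤ 1 := by omega
              have h2 : (c : ℕ) + 1 = (r : ℕ) := by omega
              have h3 : (r : ℕ) / m = (c : ℕ) / m := by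
                rw [Nat.div_eq_of_lt hlt, Nat.div_eq_of_lt (by omega)]
              exact hAcase (Or.inr ⟨h2, h3⟩)
            have hsub : (r : ℕ) - c ≤ m - 1 := by omega
            have hc1 : 1 ≤ (c : ℕ) := by omega
            set k0 : Fin (m ^ 2) := ⟨(c : ℕ) - 1, by omega⟩ with hk0
            have hk0c : k0 < c := by
              simp only [Fin.lt_def, hk0]; omega
            have hk0r : k0 < r := by
              simp only [Fin.lt_def, hk0]; omega
            have hLrk0 : L r k0 < 0 := by
              refine (IH ((k0 : ℕ)) (by simp [hk0]; omega) k0 r rfl hk0r).1 ?_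
              simp only [hk0]
              constructor
              · omega
              · exact Or.inl hrm
            have hLck0 : L c k0 < 0 := by
              refine (IH ((k0 : ℕ)) (by simp [hk0]; omega) k0 c rfl hk0c).1 ?_
              simp only [hk0]
              exact ⟨by omega, Or.inr (by omega)⟩
            have ht : 0 < L r k0 * L c k0 := mul_pos_of_neg_of_neg hLrk0 hLck0
            have hmem : k0 ∈ Finset.univ.filter (fun k => k < c) := by
              simp [hk0c]
            have hle : L r k0 * L c k0
                ≤ ∑ k ∈ Finset.univ.filter (fun k => k < c), L r k * L c k :=
              Finset.single_le_sum hSnonneg hmem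
            linarith
        have hcc := hL_diag c
        by_contra hge
        push_neg at hge
        nlinarith
      · -- pattern fails : L r c = 0
        intro hp
        push_neg at hp
        have hAzero : ¬((c : ℕ) + m = (r : ℕ)
            ∨ ((c : ℕ) + 1 = (r : ℕ) ∧ (r : ℕ) / m = (c : ℕ) / m)) := by
          rintro (h1 | h2)
          · have : (r : ℕ) - c ≤ m := by omega
            have := hp this; omega
          · have : (r : ℕ) - c ≤ m := by omega
            have := hp this; omega
        rw [if_neg hAzero] at hrec'
        have hS0 : ∑ k ∈ Finset.univ.filter (fun k => k < c), L r k * L c k = 0 := by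
          apply Finset.sum_eq_zero
          intro k hk
          simp only [Finset.mem_filter] at hk
          have hkc : (k : ℕ) < (c : ℕ) := hk.2
          have hzero : L r k = 0 := by
            refine (IH ((k : ℕ)) (by omega) k r rfl (lt_trans hk.2 hcr)).2 ?_
            intro ⟨h1, h2⟩
            by_cases hrc : (r : ℕ) - c ≤ m
            · have := hp hrc
              omega
            · omega
          rw [hzero, zero_mul]
        rw [hS0, zero_add] at hrec'
        have hcc := hL_diag c
        rcases mul_eq_zero.mp hrec'.symm with h | h
        · exact h
        · linarith
  -- characterization of nonzero entries
  have hchar : ∀ p : Fin (m ^ 2) × Fin (m ^ 2),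
      (p.2 ≤ p.1 ∧ L p.1 p.2 ≠ 0) ↔
      ((p.2 : ℕ) ≤ (p.1 : ℕ) ∧ (p.1 : ℕ) - (p.2 : ℕ) ≤ m
        ∧ (m ≤ (p.1 : ℕ) ∨ (p.1 : ℕ) - (p.2 : ℕ) ≤ 1)) := by
    rintro ⟨r, c⟩
    simp only
    constructor
    · rintro ⟨hle, hne⟩
      have hle' : (c : ℕ) ≤ (r : ℕ) := hle
      refine ⟨hle', ?_⟩
      rcases eq_or_lt_of_le hle with heq | hlt
      · have : (c : ℕ) = (r : ℕ) := by rw [heq]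
        constructor
        · omega
        · right; omega
      · by_contra hp
        exact hne ((key (c : ℕ) c r rfl hlt).2 hp)
    · rintro ⟨h1, h2, h3⟩
      have hle : c ≤ r := h1
      refine ⟨hle, ?_⟩
      rcases eq_or_lt_of_le hle with heq | hlt
      · rw [← heq]
        exact ne_of_gt (hL_diag c)
      · exact ne_of_lt ((key (c : ℕ) c r rfl hlt).1 ⟨h2, h3⟩)
  -- counting
  have hset : {p : Fin (m ^ 2) × Fin (m ^ 2) | p.2 ≤ p.1 ∧ L p.1 p.2 ≠ 0}
      = ↑(Finset.univ.filter (fun p : Fin (m ^ 2) × Fin (m ^ 2) =>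
          (p.2 : ℕ) ≤ (p.1 : ℕ) ∧ (p.1 : ℕ) - (p.2 : ℕ) ≤ m
            ∧ (m ≤ (p.1 : ℕ) ∨ (p.1 : ℕ) - (p.2 : ℕ) ≤ 1))) := by
    ext p
    simp only [Set.mem_setOf_eq, Finset.coe_filter, Finset.mem_univ, true_and,
      Set.mem_setOf_eq]
    exact hchar p
  rw [hset, Set.ncard_coe_finset]
  rw [Finset.card_filter]
  rw [Fintype.sum_prod_type]
  have hinner : ∀ r : Fin (m ^ 2),
      (∑ c : Fin (m ^ 2), if ((c : ℕ) ≤ (r : ℕ) ∧ (r : ℕ) - (c : ℕ) ≤ m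
          ∧ (m ≤ (r : ℕ) ∨ (r : ℕ) - (c : ℕ) ≤ 1)) then 1 else 0)
        = (r : ℕ) + 1 - (if m ≤ (r : ℕ) then (r : ℕ) - m else (r : ℕ) - 1) := by
    intro r
    have h1 : (∑ c : Fin (m ^ 2), if ((c : ℕ) ≤ (r : ℕ) ∧ (r : ℕ) - (c : ℕ) ≤ m
          ∧ (m ≤ (r : ℕ) ∨ (r : ℕ) - (c : ℕ) ≤ 1)) then 1 else 0)
        = ∑ cv ∈ Finset.range (m ^ 2), if (cv ≤ (r : ℕ) ∧ (r : ℕ) - cv ≤ m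
          ∧ (m ≤ (r : ℕ) ∨ (r : ℕ) - cv ≤ 1)) then 1 else 0 :=
      Fin.sum_univ_eq_sum_range (fun cv => if (cv ≤ (r : ℕ) ∧ (r : ℕ) - cv ≤ m
          ∧ (m ≤ (r : ℕ) ∨ (r : ℕ) - cv ≤ 1)) then (1 : ℕ) else 0) (m ^ 2)
    rw [h1, ← Finset.card_filter]
    have h2 : (Finset.range (m ^ 2)).filter (fun cv => cv ≤ (r : ℕ)
          ∧ (r : ℕ) - cv ≤ m ∧ (m ≤ (r : ℕ) ∨ (r : ℕ) - cv ≤ 1))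
        = Finset.Icc (if m ≤ (r : ℕ) then (r : ℕ) - m else (r : ℕ) - 1) (r : ℕ) := by
      ext cv
      simp only [Finset.mem_filter, Finset.mem_range, Finset.mem_Icc]
      have hr := r.isLt
      by_cases hc : m ≤ (r : ℕ)
      · rw [if_pos hc]; omega
      · rw [if_neg hc]; omega
    rw [h2, Nat.card_Icc]
  simp_rw [hinner]
  rw [Fin.sum_univ_eq_sum_range
    (fun rv => rv + 1 - (if m ≤ rv then rv - m else rv - 1)) (m ^ 2)]
  have hsplit : Finset.range (m ^ 2) = Finset.Ico 0 (m ^ 2) := by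
    rw [Finset.range_eq_Ico]
  rw [hsplit, ← Finset.sum_Ico_consecutive _ (Nat.zero_le m) (le_of_lt hmn)]
  have hfirst : ∑ rv ∈ Finset.Ico 0 m,
      (rv + 1 - (if m ≤ rv then rv - m else rv - 1)) = 2 * m - 1 := by
    rw [← Finset.sum_Ico_consecutive _ (Nat.zero_le 1) (by omega : 1 ≤ m)]
    have ha : ∑ rv ∈ Finset.Ico 0 1,
        (rv + 1 - (if m ≤ rv then rv - m else rv - 1)) = 1 := by
      simp
    have hb : ∑ rv ∈ Finset.Ico 1 m,
        (rv + 1 - (if m ≤ rv then rv - m else rv - 1)) = 2 * (m - 1) := by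
      have hpt : ∀ rv ∈ Finset.Ico 1 m,
          (rv + 1 - (if m ≤ rv then rv - m else rv - 1)) = 2 := by
        intro rv hrv
        simp only [Finset.mem_Ico] at hrv
        rw [if_neg (by omega)]
        omega
      rw [Finset.sum_congr rfl hpt, Finset.sum_const, Nat.card_Ico, smul_eq_mul]
      ring
    rw [ha, hb]
    omega
  have hsecond : ∑ rv ∈ Finset.Ico m (m ^ 2),
      (rv + 1 - (if m ≤ rv then rv - m else rv - 1)) = (m ^ 2 - m) * (m + 1) := by
    have hpt : ∀ rv ∈ Finset.Ico m (m ^ 2),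
        (rv + 1 - (if m ≤ rv then rv - m else rv - 1)) = m + 1 := by
      intro rv hrv
      simp only [Finset.mem_Ico] at hrv
      rw [if_pos hrv.1]
      omega
    rw [Finset.sum_congr rfl hpt, Finset.sum_const, Nat.card_Ico, smul_eq_mul]
  rw [hfirst, hsecond]
  have h1 : 1 ≤ m := by omega
  have h2 : m ≤ m ^ 2 := by nlinarith
  have h3 : 1 ≤ m ^ 3 + m := le_trans h1 (Nat.le_add_left m (m ^ 3))
  have h4 : 1 ≤ 2 * m := by omega
  have h5 : 1 ≤ m * 2 := by omega
  zify [h1, h2, h3, h4, h5, hm]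
  ring
end

section
/- Fix an integer m ≥ 2, set N = m+1 and h = 1/N, and let ε > 0 and b₀ > 0 be reals. Let A be the m² × m² symmetric positive definite matrix defined by A(r,r) = 4ε² + h²b₀ for all r, A(r,c) = −ε² if |r−c| = m or if (|r−c| = 1 and ⌈r/m⌉ = ⌈c/m⌉), and A(r,c) = 0 otherwise, and let L be its Cholesky factor. Then for all 1 ≤ c ≤ r ≤ m², L(r,c) ≠ 0 if and only if either (r ≤ m and c ∈ {r−1, r}) or (r ≥ m+1 and r − m ≤ c ≤ r). In particular, every row from row m+1 onward has exactly m+1 nonzero entries, and all fill-in (nonzero entries of L at positions where A is zero) occurs in rows r ≥ m+1. -/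
/- STATEMENT 2: sparsity pattern of the Cholesky factor L of fdMatrix.
   For 1 ≤ c ≤ r ≤ m² (1-based indices, here r+1 and c+1 for r,c : Fin (m^2)):
   L(r,c) ≠ 0 iff (r ≤ m and c ∈ {r−1, r}) or (r ≥ m+1 and r−m ≤ c ≤ r).
   In particular every row from row m+1 onward has exactly m+1 nonzero entries,
   and all fill-in occurs in rows r ≥ m+1. -/
theorem stmt_2 (m : ℕ) (hm : 2 ≤ m) (ε b₀ : ℝ) (hε : 0 < ε) (hb₀ : 0 < b₀)
    (L : Matrix (Fin (m ^ 2)) (Fin (m ^ 2)) ℝ)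
    (hL_tri : ∀ i j : Fin (m ^ 2), i < j → L i j = 0)
    (hL_diag : ∀ i : Fin (m ^ 2), 0 < L i i)
    (hL_fac : fdMatrix m ε b₀ = L * L.transpose) :
    (∀ r c : Fin (m ^ 2), c ≤ r →
      (L r c ≠ 0 ↔
        ((r : ℕ) + 1 ≤ m ∧ ((c : ℕ) + 1 + 1 = (r : ℕ) + 1 ∨ (c : ℕ) + 1 = (r : ℕ) + 1)) ∨
        (m + 1 ≤ (r : ℕ) + 1 ∧ (r : ℕ) + 1 - m ≤ (c : ℕ) + 1 ∧ (c : ℕ) + 1 ≤ (r : ℕ) + 1))) ∧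
    (∀ r : Fin (m ^ 2), m + 1 ≤ (r : ℕ) + 1 →
      {c : Fin (m ^ 2) | L r c ≠ 0}.ncard = m + 1) ∧
    (∀ r c : Fin (m ^ 2), c < r → fdMatrix m ε b₀ r c = 0 → L r c ≠ 0 →
      m + 1 ≤ (r : ℕ) + 1) := by
  have hε2 : (0:ℝ) < ε ^ 2 := by positivity
  -- evaluation of fdMatrix below the diagonal
  have hAeval : ∀ r c : Fin (m ^ 2), (c:ℕ) < (r:ℕ) →
      fdMatrix m ε b₀ r c =
        if ((c:ℕ) + m = (r:ℕ) ∨ (((c:ℕ) + 1 = (r:ℕ)) ∧ (r:ℕ)/m = (c:ℕ)/m))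
        then -ε^2 else 0 := by
    intro r c h
    have hne : r ≠ c := by
      intro e; rw [e] at h; omega
    simp only [fdMatrix]
    rw [if_neg hne]
    by_cases h1 : (c:ℕ) + m = (r:ℕ)
    · rw [if_pos (Or.inr h1), if_pos (Or.inl h1)]
    · rw [if_neg (by omega : ¬((r:ℕ) + m = (c:ℕ) ∨ (c:ℕ) + m = (r:ℕ)))]
      by_cases h2 : ((c:ℕ) + 1 = (r:ℕ)) ∧ (r:ℕ)/m = (c:ℕ)/m
      · rw [if_pos ⟨Or.inr h2.1, h2.2⟩, if_pos (Or.inr h2)]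
      · rw [if_neg, if_neg (by tauto)]
        rintro ⟨h3 | h3, h4⟩
        · omega
        · exact h2 ⟨h3, h4⟩
  -- the Cholesky recurrence
  have hrec : ∀ r c : Fin (m ^ 2), fdMatrix m ε b₀ r c
      = L r c * L c c + ∑ k ∈ Finset.Iio c, L r k * L c k := by
    intro r c
    have h1 : fdMatrix m ε b₀ r c = ∑ k, L r k * L c k := by
      rw [hL_fac]
      simp [Matrix.mul_apply, Matrix.transpose_apply]
    rw [h1, ← Finset.sum_subset (Finset.subset_univ (Finset.Iic c))
      (fun k _ hk => by
        have hck : c < k := by simpa using hk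
        rw [hL_tri c k hck, mul_zero]),
      ← Finset.Iio_insert, Finset.sum_insert (by simp)]
  -- the pattern
  let Pat : ℕ → ℕ → Prop := fun r c => c + 1 = r ∨ (m ≤ r ∧ r ≤ c + m)
  -- the key induction
  have key : ∀ cv : ℕ, ∀ c r : Fin (m ^ 2), (c:ℕ) = cv → (c:ℕ) < (r:ℕ) →
      (Pat (r:ℕ) (c:ℕ) → L r c < 0) ∧ (¬ Pat (r:ℕ) (c:ℕ) → L r c = 0) := by
    intro cv
    induction cv using Nat.strong_induction_on with
    | _ cv IH =>
      intro c r hc hcr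
      -- sign of previous columns
      have hsign : ∀ k ρ : Fin (m ^ 2), (k:ℕ) < (c:ℕ) → (k:ℕ) < (ρ:ℕ) → L ρ k ≤ 0 := by
        intro k ρ hk hkρ
        have := IH (k:ℕ) (by omega) k ρ rfl hkρ
        by_cases hp : Pat (ρ:ℕ) (k:ℕ)
        · exact le_of_lt (this.1 hp)
        · exact le_of_eq (this.2 hp)
      have hSnn : (0:ℝ) ≤ ∑ k ∈ Finset.Iio c, L r k * L c k := by
        refine Finset.sum_nonneg (fun k hk => ?_)
        have hk' : (k:ℕ) < (c:ℕ) := Fin.lt_def.mp (Finset.mem_Iio.mp hk)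
        have h1 := hsign k r hk' (by omega)
        have h2 := hsign k c hk' hk'
        nlinarith
      have hA := hrec r c
      constructor
      · -- pattern implies negative
        intro hp
        by_cases hz : ((c:ℕ) + m = (r:ℕ) ∨ (((c:ℕ) + 1 = (r:ℕ)) ∧ (r:ℕ)/m = (c:ℕ)/m))
        · -- structural nonzero of A
          rw [hAeval r c hcr, if_pos hz] at hA
          nlinarith [hL_diag c]
        · -- fill-in case
          have hAz : fdMatrix m ε b₀ r c = 0 := by
            rw [hAeval r c hcr, if_neg hz]
          rw [hAz] at hA
          -- derive m ≤ r, 1 ≤ c, r ≤ c - 1 + m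
          have hmr : m ≤ (r:ℕ) ∧ 1 ≤ (c:ℕ) ∧ (r:ℕ) + 1 ≤ (c:ℕ) + m := by
            rcases hp with hp | hp
            · -- adjacent, different blocks: m divides r
              have hnd : ¬ ((r:ℕ)/m = (c:ℕ)/m) := fun h => hz (Or.inr ⟨hp, h⟩)
              have hdvd : m ∣ (r:ℕ) := by
                by_contra hd
                have hd' : ¬ m ∣ ((c:ℕ) + 1) := by rw [hp]; exact hd
                apply hnd
                rw [← hp, Nat.succ_div, if_neg hd', add_zero]
              have : m ≤ (r:ℕ) := Nat.le_of_dvd (by omega) hdvd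
              constructor
              · exact this
              constructor
              · -- c ≥ 1
                by_contra hc0
                have : (c:ℕ) = 0 := by omega
                omega
              · omega
            · refine ⟨hp.1, ?_, ?_⟩ <;> omega
          obtain ⟨hmr1, hc1, hrc⟩ := hmr
          -- the witness column k₀ = c - 1
          have hk0lt : (c:ℕ) - 1 < m ^ 2 := by omega
          set k₀ : Fin (m ^ 2) := ⟨(c:ℕ) - 1, hk0lt⟩ with hk₀
          have hk₀v : (k₀:ℕ) = (c:ℕ) - 1 := rfl
          have hLrk : L r k₀ < 0 := by
            refine (IH (k₀:ℕ) (by omega) k₀ r rfl (by omega)).1 ?_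
            right
            constructor
            · exact hmr1
            · omega
          have hLck : L c k₀ < 0 := by
            refine (IH (k₀:ℕ) (by omega) k₀ c rfl (by omega)).1 ?_
            left; omega
          have hmem : k₀ ∈ Finset.Iio c :=
            Finset.mem_Iio.mpr (Fin.lt_def.mpr (by omega))
          have hterm : L r k₀ * L c k₀ ≤ ∑ k ∈ Finset.Iio c, L r k * L c k := by
            refine Finset.single_le_sum (f := fun k => L r k * L c k) (fun k hk => ?_) hmem
            have hk' : (k:ℕ) < (c:ℕ) := Fin.lt_def.mp (Finset.mem_Iio.mp hk)
            have h1 := hsign k r hk' (by omega)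
            have h2 := hsign k c hk' hk'
            show (0:ℝ) ≤ L r k * L c k
            nlinarith
          have hSpos : (0:ℝ) < ∑ k ∈ Finset.Iio c, L r k * L c k := by
            nlinarith
          nlinarith [hL_diag c]
      · -- outside pattern: zero
        intro hp
        have hAz : fdMatrix m ε b₀ r c = 0 := by
          rw [hAeval r c hcr, if_neg]
          rintro (h1 | ⟨h1, _⟩)
          · exact hp (Or.inr ⟨by omega, by omega⟩)
          · exact hp (Or.inl h1)
        rw [hAz] at hA
        have hS0 : ∑ k ∈ Finset.Iio c, L r k * L c k = 0 := by
          refine Finset.sum_eq_zero (fun k hk => ?_)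
          have hk' : (k:ℕ) < (c:ℕ) := Fin.lt_def.mp (Finset.mem_Iio.mp hk)
          have hLrk0 : L r k = 0 := by
            refine (IH (k:ℕ) (by omega) k r rfl (by omega)).2 ?_
            rintro (h1 | ⟨h1, h2⟩)
            · -- k + 1 = r impossible since k < c < r and c+1 ≠ r would need... 
              omega
            · -- m ≤ r and r ≤ k + m; but ¬Pat r c means r < m or c + m < r
              have : ¬ ((c:ℕ) + 1 = (r:ℕ)) := fun h => hp (Or.inl h)
              have : ¬ (m ≤ (r:ℕ) ∧ (r:ℕ) ≤ (c:ℕ) + m) := fun h => hp (Or.inr h)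
              omega
          rw [hLrk0, zero_mul]
        rw [hS0, add_zero] at hA
        have hcc := hL_diag c
        have : L r c * L c c = 0 := hA.symm
        rcases mul_eq_zero.mp this with h | h
        · exact h
        · exact absurd h (ne_of_gt hcc)
  have key' : ∀ c r : Fin (m ^ 2), (c:ℕ) < (r:ℕ) →
      (Pat (r:ℕ) (c:ℕ) → L r c < 0) ∧ (¬ Pat (r:ℕ) (c:ℕ) → L r c = 0) :=
    fun c r h => key (c:ℕ) c r rfl h
  -- part 1
  have part1 : ∀ r c : Fin (m ^ 2), c ≤ r →
      (L r c ≠ 0 ↔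
        ((r : ℕ) + 1 ≤ m ∧ ((c : ℕ) + 1 + 1 = (r : ℕ) + 1 ∨ (c : ℕ) + 1 = (r : ℕ) + 1)) ∨
        (m + 1 ≤ (r : ℕ) + 1 ∧ (r : ℕ) + 1 - m ≤ (c : ℕ) + 1 ∧ (c : ℕ) + 1 ≤ (r : ℕ) + 1)) := by
    intro r c hcr
    have hcr' : (c:ℕ) ≤ (r:ℕ) := hcr
    rcases eq_or_lt_of_le hcr' with he | hlt
    · have : c = r := Fin.ext he
      subst this
      constructor
      · intro _
        have hcn : (c:ℕ) < m ^ 2 := c.isLt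
        omega
      · intro _
        exact ne_of_gt (hL_diag c)
    · have hk := key' c r hlt
      constructor
      · intro hne
        have hp : Pat (r:ℕ) (c:ℕ) := by
          by_contra hnp
          exact hne (hk.2 hnp)
        rcases hp with hp | hp <;> omega
      · intro hrhs
        have hp : Pat (r:ℕ) (c:ℕ) := by
          rcases hrhs with ⟨h1, h2 | h2⟩ | ⟨h1, h2, h3⟩
          · exact Or.inl (by omega)
          · omega
          · exact Or.inr ⟨by omega, by omega⟩
        exact ne_of_lt (hk.1 hp)
  refine ⟨part1, ?_, ?_⟩
  · -- part 2: row count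
    intro r hr
    have hrm : m ≤ (r:ℕ) := by omega
    have halt : (r:ℕ) - m < m ^ 2 := by have := r.isLt; omega
    set a : Fin (m ^ 2) := ⟨(r:ℕ) - m, halt⟩ with ha
    have hset : {c : Fin (m ^ 2) | L r c ≠ 0} = ↑(Finset.Icc a r) := by
      ext c
      simp only [Set.mem_setOf_eq, Finset.coe_Icc, Set.mem_Icc]
      constructor
      · intro hne
        by_cases hcr : (c:ℕ) ≤ (r:ℕ)
        · have := (part1 r c hcr).mp hne
          constructor
          · rw [Fin.le_def]
            show (r:ℕ) - m ≤ (c:ℕ)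
            omega
          · exact hcr
        · exact absurd (hL_tri r c (by rw [Fin.lt_def]; omega)) hne
      · rintro ⟨h1, h2⟩
        have h1' : (r:ℕ) - m ≤ (c:ℕ) := h1
        have h2' : (c:ℕ) ≤ (r:ℕ) := h2
        apply (part1 r c h2').mpr
        right
        refine ⟨by omega, by omega, by omega⟩
    rw [hset, Set.ncard_coe_finset, Fin.card_Icc]
    show (r:ℕ) + 1 - ((r:ℕ) - m) = m + 1
    omega
  · -- part 3: fill-in rows
    intro r c hcr hA hne
    have hlt : (c:ℕ) < (r:ℕ) := hcr
    have hk := key' c r hlt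
    have hp : Pat (r:ℕ) (c:ℕ) := by
      by_contra hnp
      exact hne (hk.2 hnp)
    rcases hp with hp | hp
    · -- adjacent: A r c = 0 forces different blocks, so m ∣ r
      rw [hAeval r c hlt] at hA
      by_cases hz : ((c:ℕ) + m = (r:ℕ) ∨ (((c:ℕ) + 1 = (r:ℕ)) ∧ (r:ℕ)/m = (c:ℕ)/m))
      · rw [if_pos hz] at hA
        nlinarith
      · have hnd : ¬ ((r:ℕ)/m = (c:ℕ)/m) := fun h => hz (Or.inr ⟨hp, h⟩)
        have hdvd : m ∣ (r:ℕ) := by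
          by_contra hd
          have hd' : ¬ m ∣ ((c:ℕ) + 1) := by rw [hp]; exact hd
          apply hnd
          rw [← hp, Nat.succ_div, if_neg hd', add_zero]
        have := Nat.le_of_dvd (by omega) hdvd
        omega
    · omega
end

section
/- Fix an integer m ≥ 2, set N = m+1 and h = 1/N, and let ε > 0 and b₀ > 0 be reals. Let A be the m² × m² symmetric positive definite matrix defined by A(r,r) = 4ε² + h²b₀ for all r, A(r,c) = −ε² if |r−c| = m or if (|r−c| = 1 and ⌈r/m⌉ = ⌈c/m⌉), and A(r,c) = 0 otherwise, and let L be its Cholesky factor. Then the number of fill-in entries, i.e. the number of pairs (r,c) with 1 ≤ c < r ≤ m² such that L(r,c) ≠ 0 but A(r,c) = 0, equals (m−1)³; equivalently, the number of pairs (r,c) with c ≤ r and A(r,c) ≠ 0 equals 3m² − 2m, and (m−1)³ + 3m² − 2m = m³ + m − 1. -/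
/-- The nonzero pattern of the Cholesky factor (in 0-based ℕ indices). -/
def cholPat (m r c : ℕ) : Prop := c < r ∧ r ≤ c + m ∧ (m ≤ r ∨ r = c + 1)

lemma block_iff (m c : ℕ) : (c + 1) / m = c / m ↔ ¬ m ∣ (c + 1) := by
  rw [Nat.succ_div]
  by_cases h : m ∣ (c + 1) <;> simp [h]

lemma card_filter_fin (n : ℕ) (q : ℕ → Prop) [DecidablePred q] :
    (Finset.univ.filter (fun c : Fin n => q (c : ℕ))).card
      = ((Finset.range n).filter q).card := by
  rw [← Finset.card_image_of_injective (Finset.univ.filter (fun c : Fin n => q (c : ℕ)))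
    Fin.val_injective]
  congr 1
  ext x
  simp only [Finset.mem_image, Finset.mem_filter, Finset.mem_univ, true_and, Finset.mem_range]
  constructor
  · rintro ⟨c, hc, rfl⟩; exact ⟨c.isLt, hc⟩
  · rintro ⟨hx, hq⟩; exact ⟨⟨x, hx⟩, hq, rfl⟩

lemma card_prod_filter_fst (n : ℕ) (q : Fin n → Fin n → Prop) [∀ r c, Decidable (q r c)] :
    (Finset.univ.filter (fun p : Fin n × Fin n => q p.1 p.2)).card
      = ∑ r : Fin n, (Finset.univ.filter (fun c => q r c)).card := by
  rw [Finset.card_eq_sum_card_fiberwise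
    (f := Prod.fst) (t := Finset.univ) (fun x _ => Finset.mem_univ _)]
  refine Finset.sum_congr rfl (fun r _ => ?_)
  rw [show (Finset.univ.filter (fun p : Fin n × Fin n => q p.1 p.2)).filter
      (fun p => p.1 = r) = (Finset.univ.filter (fun c => q r c)).image (fun c => (r, c)) by
    ext p
    simp only [Finset.mem_filter, Finset.mem_univ, true_and, Finset.mem_image]
    constructor
    · rintro ⟨hq, h1⟩
      exact ⟨p.2, by rw [← h1]; exact hq, by rw [← h1]⟩
    · rintro ⟨c, hc, rfl⟩; exact ⟨hc, rfl⟩]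
  exact Finset.card_image_of_injective _ (fun a b h => by simpa using h)

lemma card_prod_filter_snd (n : ℕ) (q : Fin n → Fin n → Prop) [∀ r c, Decidable (q r c)] :
    (Finset.univ.filter (fun p : Fin n × Fin n => q p.1 p.2)).card
      = ∑ c : Fin n, (Finset.univ.filter (fun r => q r c)).card := by
  rw [Finset.card_eq_sum_card_fiberwise
    (f := Prod.snd) (t := Finset.univ) (fun x _ => Finset.mem_univ _)]
  refine Finset.sum_congr rfl (fun c _ => ?_)
  rw [show (Finset.univ.filter (fun p : Fin n × Fin n => q p.1 p.2)).filter
      (fun p => p.2 = c) = (Finset.univ.filter (fun r => q r c)).image (fun r => (r, c)) by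
    ext p
    simp only [Finset.mem_filter, Finset.mem_univ, true_and, Finset.mem_image]
    constructor
    · rintro ⟨hq, h1⟩
      exact ⟨p.1, by rw [← h1]; exact hq, by rw [← h1]⟩
    · rintro ⟨r, hr, rfl⟩; exact ⟨hr, rfl⟩]
  exact Finset.card_image_of_injective _ (fun a b h => by simpa using h)

lemma fd_apply_lower (m : ℕ) (ε b₀ : ℝ) {r c : Fin (m ^ 2)} (hlt : (c : ℕ) < (r : ℕ)) :
    fdMatrix m ε b₀ r c
      = if (c : ℕ) + m = (r : ℕ) ∨ ((c : ℕ) + 1 = (r : ℕ) ∧ (r : ℕ) / m = (c : ℕ) / m)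
        then -ε ^ 2 else 0 := by
  have hne : ¬ (r = c) := fun h => by rw [h] at hlt; exact absurd hlt (lt_irrefl _)
  have h2 : ¬ ((r : ℕ) + m = (c : ℕ)) := by omega
  have h3 : ¬ ((r : ℕ) + 1 = (c : ℕ)) := by omega
  unfold fdMatrix
  rw [if_neg hne]
  by_cases h4 : (c : ℕ) + m = (r : ℕ)
  · rw [if_pos (Or.inr h4), if_pos (Or.inl h4)]
  · rw [if_neg (fun h => h.elim h2 h4)]
    by_cases h5 : (c : ℕ) + 1 = (r : ℕ) ∧ (r : ℕ) / m = (c : ℕ) / m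
    · rw [if_pos ⟨Or.inr h5.1, h5.2⟩, if_pos (Or.inr h5)]
    · rw [if_neg, if_neg (fun h => h.elim h4 h5)]
      rintro ⟨hor, hsame⟩
      exact hor.elim h3 (fun hb => h5 ⟨hb, hsame⟩)

lemma fd_diag_pos (m : ℕ) {ε b₀ : ℝ} (hε : 0 < ε) (hb₀ : 0 < b₀) (r : Fin (m ^ 2)) :
    0 < fdMatrix m ε b₀ r r := by
  unfold fdMatrix
  rw [if_pos rfl]
  positivity

/-- The key sign lemma for the Cholesky factor. -/
lemma chol_key (m : ℕ) (hm : 2 ≤ m) (ε b₀ : ℝ) (hε : 0 < ε)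
    (L : Matrix (Fin (m ^ 2)) (Fin (m ^ 2)) ℝ)
    (hL_tri : ∀ i j : Fin (m ^ 2), i < j → L i j = 0)
    (hL_diag : ∀ i : Fin (m ^ 2), 0 < L i i)
    (hL_fac : fdMatrix m ε b₀ = L * L.transpose) :
    ∀ (j : ℕ) (c r : Fin (m ^ 2)), (c : ℕ) < j → (c : ℕ) < (r : ℕ) →
      (cholPat m (r : ℕ) (c : ℕ) → L r c < 0)
        ∧ (¬ cholPat m (r : ℕ) (c : ℕ) → L r c = 0) := by
  have hA : ∀ a b : Fin (m ^ 2), fdMatrix m ε b₀ a b = ∑ k, L a k * L b k := by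
    intro a b
    rw [hL_fac, Matrix.mul_apply]
    simp [Matrix.transpose_apply]
  intro j
  induction j using Nat.strong_induction_on with
  | _ j IH =>
  intro c r hcj hcr
  have hsplit : fdMatrix m ε b₀ r c
      = L r c * L c c + ∑ k ∈ Finset.univ.erase c, L r k * L c k := by
    rw [hA r c]
    exact (Finset.add_sum_erase _ _ (Finset.mem_univ c)).symm
  have hLe : ∀ (a k : Fin (m ^ 2)), (k : ℕ) < (c : ℕ) → (k : ℕ) < (a : ℕ) → L a k ≤ 0 := by
    intro a k hk hka
    have h := IH (c : ℕ) hcj k a (by omega) hka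
    by_cases hp : cholPat m (a : ℕ) (k : ℕ)
    · exact (h.1 hp).le
    · rw [h.2 hp]
  have hterm : ∀ k ∈ Finset.univ.erase c, 0 ≤ L r k * L c k := by
    intro k hk
    have hkc : k ≠ c := (Finset.mem_erase.mp hk).1
    rcases lt_trichotomy ((k : ℕ)) ((c : ℕ)) with h | h | h
    · have h1 := hLe r k h (by omega)
      have h2 := hLe c k h h
      nlinarith
    · exact absurd (Fin.ext h) hkc
    · rw [hL_tri c k (by exact h), mul_zero]
  have hSnn : 0 ≤ ∑ k ∈ Finset.univ.erase c, L r k * L c k := Finset.sum_nonneg hterm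
  have hcc := hL_diag c
  by_cases hpat : cholPat m (r : ℕ) (c : ℕ)
  · obtain ⟨-, hle, hor⟩ := hpat
    have hmain : L r c * L c c < 0 := by
      by_cases hAz : (c : ℕ) + m = (r : ℕ) ∨ ((c : ℕ) + 1 = (r : ℕ) ∧ (r : ℕ) / m = (c : ℕ) / m)
      · have hv : fdMatrix m ε b₀ r c = -ε ^ 2 := by rw [fd_apply_lower m ε b₀ hcr, if_pos hAz]
        have heq : L r c * L c c = -ε ^ 2 - ∑ k ∈ Finset.univ.erase c, L r k * L c k := by
          rw [← hv, hsplit]; ring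
        rw [heq]
        have : (0:ℝ) < ε ^ 2 := by positivity
        linarith
      · push_neg at hAz
        obtain ⟨hAm, hA1⟩ := hAz
        have hv : fdMatrix m ε b₀ r c = 0 := by
          rw [fd_apply_lower m ε b₀ hcr, if_neg]
          rintro (h | h)
          · exact hAm h
          · exact hA1 h.1 h.2
        have hmr : m ≤ (r : ℕ) := by
          rcases hor with h | h
          · exact h
          · have hnd : ¬ ((r : ℕ) / m = (c : ℕ) / m) := hA1 (by omega)
            rw [show (r : ℕ) = (c : ℕ) + 1 from h, block_iff] at hnd
            push_neg at hnd
            have := Nat.le_of_dvd (by omega) hnd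
            omega
        have hc1 : 1 ≤ (c : ℕ) := by omega
        set k0 : Fin (m ^ 2) := ⟨(c : ℕ) - 1, by omega⟩ with hk0
        have hk0v : (k0 : ℕ) = (c : ℕ) - 1 := rfl
        have hr0 : L r k0 < 0 :=
          (IH (c : ℕ) hcj k0 r (by omega) (by omega)).1 ⟨by omega, by omega, Or.inl hmr⟩
        have hc0 : L c k0 < 0 :=
          (IH (c : ℕ) hcj k0 c (by omega) (by omega)).1 ⟨by omega, by omega, Or.inr (by omega)⟩
        have hk0mem : k0 ∈ Finset.univ.erase c := by
          rw [Finset.mem_erase]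
          exact ⟨by intro h; rw [Fin.ext_iff] at h; omega, Finset.mem_univ _⟩
        have hpos : 0 < ∑ k ∈ Finset.univ.erase c, L r k * L c k :=
          lt_of_lt_of_le (mul_pos_of_neg_of_neg hr0 hc0) (Finset.single_le_sum hterm hk0mem)
        have heq : L r c * L c c = 0 - ∑ k ∈ Finset.univ.erase c, L r k * L c k := by
          rw [← hv, hsplit]; ring
        rw [heq]; linarith
    have hneg : L r c < 0 := by
      by_contra h
      push_neg at h
      nlinarith
    exact ⟨fun _ => hneg, fun h => absurd ⟨hcr, hle, hor⟩ h⟩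
  · have h2 : ¬ ((r : ℕ) ≤ (c : ℕ) + m ∧ (m ≤ (r : ℕ) ∨ (r : ℕ) = (c : ℕ) + 1)) :=
      fun ⟨a, b⟩ => hpat ⟨hcr, a, b⟩
    have htz : ∀ k ∈ Finset.univ.erase c, L r k * L c k = 0 := by
      intro k hk
      have hkc : k ≠ c := (Finset.mem_erase.mp hk).1
      rcases lt_trichotomy ((k : ℕ)) ((c : ℕ)) with h | h | h
      · have : L r k = 0 := by
          refine (IH (c : ℕ) hcj k r (by omega) (by omega)).2 ?_
          rintro ⟨-, hb, hc'⟩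
          by_cases hband : (r : ℕ) ≤ (c : ℕ) + m
          · rcases hc' with h' | h'
            · exact h2 ⟨hband, Or.inl h'⟩
            · omega
          · omega
        rw [this, zero_mul]
      · exact absurd (Fin.ext h) hkc
      · rw [hL_tri c k (by exact h), mul_zero]
    have hv : fdMatrix m ε b₀ r c = 0 := by
      rw [fd_apply_lower m ε b₀ hcr, if_neg]
      rintro (h | h)
      · exact h2 ⟨by omega, Or.inl (by omega)⟩
      · exact h2 ⟨by omega, Or.inr (by omega)⟩
    have hz : L r c * L c c = 0 := by
      have heq := hsplit
      rw [hv, Finset.sum_eq_zero htz, add_zero] at heq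
      linarith
    rcases mul_eq_zero.mp hz with h | h
    · exact ⟨fun hp => absurd hp hpat, fun _ => h⟩
    · exact absurd h (ne_of_gt hcc)

lemma pow_div1 (m : ℕ) (hm : 2 ≤ m) : (m ^ 2 - 1) / m = m - 1 := by
  obtain ⟨k, rfl⟩ : ∃ k, m = k + 2 := ⟨m - 2, by omega⟩
  have h1 : (k + 2) ^ 2 - 1 = (k + 2) * (k + 1) + (k + 1) := by
    have : (k + 2) ^ 2 = k ^ 2 + 4 * k + 4 := by ring
    have : (k + 2) * (k + 1) = k ^ 2 + 3 * k + 2 := by ring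
    omega
  rw [h1, Nat.mul_add_div (by omega), Nat.div_eq_of_lt (by omega)]
  omega

lemma dvd_count1 (m : ℕ) (hm : 2 ≤ m) :
    ((Finset.Ico m (m ^ 2)).filter (fun r => m ∣ r)).card = m - 1 := by
  have h : (Finset.Ico m (m ^ 2)).filter (fun r => m ∣ r)
      = (Finset.Ioc 0 (m ^ 2 - 1)).filter (fun r => m ∣ r) := by
    ext x
    simp only [Finset.mem_filter, Finset.mem_Ico, Finset.mem_Ioc]
    constructor
    · rintro ⟨⟨h1, h2⟩, h3⟩; exact ⟨⟨by omega, by omega⟩, h3⟩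
    · rintro ⟨⟨h1, h2⟩, h3⟩
      have := Nat.le_of_dvd h1 h3
      exact ⟨⟨this, by omega⟩, h3⟩
  rw [h, Nat.Ioc_filter_dvd_card_eq_div, pow_div1 m hm]

lemma dvd_count2 (m : ℕ) (hm : 2 ≤ m) :
    ((Finset.range (m ^ 2)).filter (fun c => m ∣ (c + 1))).card = m := by
  have h : ((Finset.range (m ^ 2)).filter (fun c => m ∣ (c + 1))).card
      = ((Finset.Ioc 0 (m ^ 2)).filter (fun x => m ∣ x)).card := by
    apply Finset.card_bij (fun c _ => c + 1)
    · intro c hc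
      simp only [Finset.mem_filter, Finset.mem_range] at hc
      simp only [Finset.mem_filter, Finset.mem_Ioc]
      exact ⟨⟨by omega, by omega⟩, hc.2⟩
    · intro a _ b _ h; omega
    · intro x hx
      simp only [Finset.mem_filter, Finset.mem_Ioc] at hx
      refine ⟨x - 1, ?_, by omega⟩
      simp only [Finset.mem_filter, Finset.mem_range]
      exact ⟨by omega, by rw [show x - 1 + 1 = x by omega]; exact hx.2⟩
  rw [h, Nat.Ioc_filter_dvd_card_eq_div, pow_two, Nat.mul_div_cancel_left _ (by omega)]

lemma fill_row_card (m r : ℕ) (hm : 2 ≤ m) (hr : r < m ^ 2) :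
    ((Finset.range (m ^ 2)).filter
        (fun c => m ≤ r ∧ c + 1 ≤ r ∧ r + 1 ≤ c + m ∧ (c + 1 = r → m ∣ r))).card
      = if m ≤ r then (if m ∣ r then m - 1 else m - 2) else 0 := by
  by_cases hmr : m ≤ r
  · rw [if_pos hmr]
    by_cases hd : m ∣ r
    · rw [if_pos hd]
      have h : (Finset.range (m ^ 2)).filter
          (fun c => m ≤ r ∧ c + 1 ≤ r ∧ r + 1 ≤ c + m ∧ (c + 1 = r → m ∣ r))
          = Finset.Ico (r - m + 1) r := by
        ext c
        simp only [Finset.mem_filter, Finset.mem_range, Finset.mem_Ico]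
        constructor
        · rintro ⟨h1, -, h3, h4, -⟩; omega
        · rintro ⟨h1, h2⟩
          exact ⟨by omega, hmr, by omega, by omega, fun _ => hd⟩
      rw [h, Nat.card_Ico]; omega
    · rw [if_neg hd]
      have h : (Finset.range (m ^ 2)).filter
          (fun c => m ≤ r ∧ c + 1 ≤ r ∧ r + 1 ≤ c + m ∧ (c + 1 = r → m ∣ r))
          = Finset.Ico (r - m + 1) (r - 1) := by
        ext c
        simp only [Finset.mem_filter, Finset.mem_range, Finset.mem_Ico]
        constructor
        · rintro ⟨h1, -, h3, h4, h5⟩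
          have : c + 1 ≠ r := fun h => hd (h5 h)
          omega
        · rintro ⟨h1, h2⟩
          exact ⟨by omega, hmr, by omega, by omega, fun h => by omega⟩
      rw [h, Nat.card_Ico]; omega
  · rw [if_neg hmr]
    rw [Finset.card_eq_zero, Finset.filter_eq_empty_iff]
    intro c _
    rintro ⟨h1, -⟩
    exact hmr h1

lemma fill_total (m : ℕ) (hm : 2 ≤ m) :
    ∑ r ∈ Finset.range (m ^ 2),
        (if m ≤ r then (if m ∣ r then m - 1 else m - 2) else 0) = (m - 1) ^ 3 := by
  have hmn : m ≤ m ^ 2 := Nat.le_self_pow (by norm_num) m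
  rw [Finset.range_eq_Ico, ← Finset.sum_Ico_consecutive _ (Nat.zero_le m) hmn]
  rw [Finset.sum_eq_zero (fun r hr => by
    rw [Finset.mem_Ico] at hr
    rw [if_neg (by omega)]), zero_add]
  have hstep : ∑ r ∈ Finset.Ico m (m ^ 2),
      (if m ≤ r then (if m ∣ r then m - 1 else m - 2) else 0)
      = ∑ r ∈ Finset.Ico m (m ^ 2), ((m - 2) + (if m ∣ r then 1 else 0)) := by
    refine Finset.sum_congr rfl (fun r hr => ?_)
    rw [Finset.mem_Ico] at hr
    rw [if_pos hr.1]
    split_ifs <;> omega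
  rw [hstep, Finset.sum_add_distrib, Finset.sum_const, Nat.card_Ico, smul_eq_mul]
  have hb : ∑ r ∈ Finset.Ico m (m ^ 2), (if m ∣ r then 1 else 0)
      = ((Finset.Ico m (m ^ 2)).filter (fun r => m ∣ r)).card := by
    rw [Finset.card_filter]
  rw [hb, dvd_count1 m hm]
  have h1 : 1 ≤ m := by omega
  zify [hmn, h1, hm]
  ring

lemma a_col_card (m c : ℕ) (hm : 2 ≤ m) (hc : c < m ^ 2) :
    ((Finset.range (m ^ 2)).filter
        (fun r => c ≤ r ∧ (r = c ∨ c + m = r ∨ (c + 1 = r ∧ ¬ m ∣ (c + 1))))).card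
      = 1 + (if c + m < m ^ 2 then 1 else 0) + (if m ∣ (c + 1) then 0 else 1) := by
  have hc1 : ¬ m ∣ (c + 1) → c + 1 < m ^ 2 := by
    intro hd
    rcases Nat.lt_or_ge (c + 1) (m ^ 2) with h | h
    · exact h
    · exfalso
      have : c + 1 = m ^ 2 := by omega
      exact hd (this ▸ dvd_pow_self m (by norm_num))
  by_cases h1 : c + m < m ^ 2 <;> by_cases h2 : m ∣ (c + 1)
  · rw [if_pos h1, if_pos h2]
    have h : (Finset.range (m ^ 2)).filter
        (fun r => c ≤ r ∧ (r = c ∨ c + m = r ∨ (c + 1 = r ∧ ¬ m ∣ (c + 1))))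
        = {c, c + m} := by
      ext r
      simp only [Finset.mem_filter, Finset.mem_range, Finset.mem_insert, Finset.mem_singleton]
      constructor
      · rintro ⟨-, -, (h | h | ⟨h, hnd⟩)⟩
        · exact Or.inl h
        · exact Or.inr h.symm
        · exact absurd h2 hnd
      · rintro (h | h)
        · exact ⟨by omega, by omega, Or.inl (by omega)⟩
        · exact ⟨by omega, by omega, Or.inr (Or.inl (by omega))⟩
    rw [h, Finset.card_insert_of_notMem (by simp; omega), Finset.card_singleton]
  · rw [if_pos h1, if_neg h2]
    have hc1' := hc1 h2
    have h : (Finset.range (m ^ 2)).filter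
        (fun r => c ≤ r ∧ (r = c ∨ c + m = r ∨ (c + 1 = r ∧ ¬ m ∣ (c + 1))))
        = {c, c + 1, c + m} := by
      ext r
      simp only [Finset.mem_filter, Finset.mem_range, Finset.mem_insert, Finset.mem_singleton]
      constructor
      · rintro ⟨-, -, (h | h | ⟨h, -⟩)⟩
        · exact Or.inl h
        · exact Or.inr (Or.inr h.symm)
        · exact Or.inr (Or.inl h.symm)
      · rintro (h | h | h)
        · exact ⟨by omega, by omega, Or.inl (by omega)⟩
        · exact ⟨by omega, by omega, Or.inr (Or.inr ⟨by omega, h2⟩)⟩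
        · exact ⟨by omega, by omega, Or.inr (Or.inl (by omega))⟩
    rw [h, Finset.card_insert_of_notMem (by simp; omega),
      Finset.card_insert_of_notMem (by simp; omega), Finset.card_singleton]
  · rw [if_neg h1, if_pos h2]
    have h : (Finset.range (m ^ 2)).filter
        (fun r => c ≤ r ∧ (r = c ∨ c + m = r ∨ (c + 1 = r ∧ ¬ m ∣ (c + 1))))
        = {c} := by
      ext r
      simp only [Finset.mem_filter, Finset.mem_range, Finset.mem_singleton]
      constructor
      · rintro ⟨hr, -, (h | h | ⟨h, hnd⟩)⟩
        · exact h
        · omega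
        · exact absurd h2 hnd
      · intro h
        exact ⟨by omega, by omega, Or.inl (by omega)⟩
    rw [h, Finset.card_singleton]
  · rw [if_neg h1, if_neg h2]
    have hc1' := hc1 h2
    have h : (Finset.range (m ^ 2)).filter
        (fun r => c ≤ r ∧ (r = c ∨ c + m = r ∨ (c + 1 = r ∧ ¬ m ∣ (c + 1))))
        = {c, c + 1} := by
      ext r
      simp only [Finset.mem_filter, Finset.mem_range, Finset.mem_insert, Finset.mem_singleton]
      constructor
      · rintro ⟨hr, -, (h | h | ⟨h, -⟩)⟩
        · exact Or.inl h
        · omega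
        · exact Or.inr h.symm
      · rintro (h | h)
        · exact ⟨by omega, by omega, Or.inl (by omega)⟩
        · exact ⟨by omega, by omega, Or.inr (Or.inr ⟨by omega, h2⟩)⟩
    rw [h, Finset.card_insert_of_notMem (by simp), Finset.card_singleton]

lemma a_total (m : ℕ) (hm : 2 ≤ m) :
    ∑ c ∈ Finset.range (m ^ 2),
        (1 + (if c + m < m ^ 2 then 1 else 0) + (if m ∣ (c + 1) then 0 else 1))
      = 3 * m ^ 2 - 2 * m := by
  have hmn : m ≤ m ^ 2 := Nat.le_self_pow (by norm_num) m
  rw [Finset.sum_add_distrib, Finset.sum_add_distrib, Finset.sum_const, Finset.card_range,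
    smul_eq_mul, mul_one]
  have h1 : ∑ c ∈ Finset.range (m ^ 2), (if c + m < m ^ 2 then 1 else 0) = m ^ 2 - m := by
    rw [Finset.sum_boole]
    norm_num
    rw [show (Finset.range (m ^ 2)).filter (fun c => c + m < m ^ 2)
        = Finset.range (m ^ 2 - m) by ext x; simp only [Finset.mem_filter, Finset.mem_range]; omega,
      Finset.card_range]
  have h2 : ∑ c ∈ Finset.range (m ^ 2), (if m ∣ (c + 1) then 0 else 1) = m ^ 2 - m := by
    have hpt : ∀ c : ℕ, (if m ∣ (c + 1) then (0:ℕ) else 1) = (if ¬ m ∣ (c + 1) then 1 else 0) := by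
      intro c; split_ifs <;> omega
    rw [Finset.sum_congr rfl (fun c _ => hpt c)]
    have := Finset.card_filter_add_card_filter_not
      (s := Finset.range (m ^ 2)) (p := fun c => m ∣ (c + 1))
    rw [show ∑ c ∈ Finset.range (m ^ 2), (if ¬ m ∣ (c + 1) then (1:ℕ) else 0)
        = ((Finset.range (m ^ 2)).filter (fun c => ¬ m ∣ (c + 1))).card by
      rw [Finset.card_filter]]
    rw [dvd_count2 m hm, Finset.card_range] at this
    omega
  rw [h1, h2]
  obtain ⟨n, hn, hmn'⟩ : ∃ n, m ^ 2 = n ∧ m ≤ n := ⟨m ^ 2, rfl, hmn⟩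
  rw [hn]
  omega

/- STATEMENT 3 -/
theorem stmt_3 (m : ℕ) (hm : 2 ≤ m) (ε b₀ : ℝ) (hε : 0 < ε) (hb₀ : 0 < b₀)
    (L : Matrix (Fin (m ^ 2)) (Fin (m ^ 2)) ℝ)
    (hL_tri : ∀ i j : Fin (m ^ 2), i < j → L i j = 0)
    (hL_diag : ∀ i : Fin (m ^ 2), 0 < L i i)
    (hL_fac : fdMatrix m ε b₀ = L * L.transpose) :
    {p : Fin (m ^ 2) × Fin (m ^ 2) |
        p.2 < p.1 ∧ L p.1 p.2 ≠ 0 ∧ fdMatrix m ε b₀ p.1 p.2 = 0}.ncard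
      = (m - 1) ^ 3 ∧
    {p : Fin (m ^ 2) × Fin (m ^ 2) |
        p.2 ≤ p.1 ∧ fdMatrix m ε b₀ p.1 p.2 ≠ 0}.ncard
      = 3 * m ^ 2 - 2 * m ∧
    (m - 1) ^ 3 + (3 * m ^ 2 - 2 * m) = m ^ 3 + m - 1 := by
  have hε2 : (-ε ^ 2 : ℝ) ≠ 0 := by
    have : (0:ℝ) < ε ^ 2 := by positivity
    linarith
  have hkey := chol_key m hm ε b₀ hε L hL_tri hL_diag hL_fac
  -- characterization of the nonzero entries of L below the diagonal
  have hLiff : ∀ r c : Fin (m ^ 2), (c : ℕ) < (r : ℕ) →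
      (L r c ≠ 0 ↔ cholPat m (r : ℕ) (c : ℕ)) := by
    intro r c hlt
    have h := hkey ((c : ℕ) + 1) c r (by omega) hlt
    constructor
    · intro hne
      by_contra hp
      exact hne (h.2 hp)
    · intro hp
      exact ne_of_lt (h.1 hp)
  -- Part 1: the fill-in count
  have part1 : {p : Fin (m ^ 2) × Fin (m ^ 2) |
      p.2 < p.1 ∧ L p.1 p.2 ≠ 0 ∧ fdMatrix m ε b₀ p.1 p.2 = 0}.ncard = (m - 1) ^ 3 := by
    have hset : {p : Fin (m ^ 2) × Fin (m ^ 2) |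
        p.2 < p.1 ∧ L p.1 p.2 ≠ 0 ∧ fdMatrix m ε b₀ p.1 p.2 = 0}
        = ↑(Finset.univ.filter (fun p : Fin (m ^ 2) × Fin (m ^ 2) =>
            m ≤ (p.1 : ℕ) ∧ (p.2 : ℕ) + 1 ≤ (p.1 : ℕ) ∧ (p.1 : ℕ) + 1 ≤ (p.2 : ℕ) + m
              ∧ ((p.2 : ℕ) + 1 = (p.1 : ℕ) → m ∣ (p.1 : ℕ)))) := by
      ext p
      obtain ⟨r, c⟩ := p
      simp only [Set.mem_setOf_eq, Finset.coe_filter, Finset.mem_univ, true_and]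
      constructor
      · rintro ⟨hlt, hLne, hfd⟩
        have hlt' : (c : ℕ) < (r : ℕ) := hlt
        have hpat := (hLiff r c hlt').mp hLne
        obtain ⟨-, hle, hor⟩ := hpat
        rw [fd_apply_lower m ε b₀ hlt'] at hfd
        have hcond : ¬ ((c : ℕ) + m = (r : ℕ)
            ∨ ((c : ℕ) + 1 = (r : ℕ) ∧ (r : ℕ) / m = (c : ℕ) / m)) := by
          intro h
          rw [if_pos h] at hfd
          exact hε2 hfd
        push_neg at hcond
        obtain ⟨hAm, hA1⟩ := hcond
        have himp : (c : ℕ) + 1 = (r : ℕ) → m ∣ (r : ℕ) := by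
          intro h
          have hnd := hA1 h
          have hdvd : m ∣ ((c : ℕ) + 1) := by
            by_contra hh
            rw [show (r : ℕ) = (c : ℕ) + 1 from h.symm] at hnd
            exact hnd ((block_iff m (c : ℕ)).mpr hh)
          exact h ▸ hdvd
        have hmr : m ≤ (r : ℕ) := by
          rcases hor with h | h
          · exact h
          · have := Nat.le_of_dvd (by omega) (himp (by omega))
            omega
        exact ⟨hmr, by omega, by omega, himp⟩
      · rintro ⟨hmr, hlt, hband, himp⟩
        have hlt' : (c : ℕ) < (r : ℕ) := by omega
        refine ⟨hlt', (hLiff r c hlt').mpr ⟨hlt', by omega, Or.inl hmr⟩, ?_⟩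
        rw [fd_apply_lower m ε b₀ hlt', if_neg]
        rintro (h | ⟨h, hsame⟩)
        · omega
        · have := himp h
          rw [show (r : ℕ) = (c : ℕ) + 1 from h.symm, block_iff] at hsame
          rw [show (r : ℕ) = (c : ℕ) + 1 from h.symm] at this
          exact hsame this
    rw [hset, Set.ncard_coe_finset,
      card_prod_filter_fst (m ^ 2) (fun r c => m ≤ (r : ℕ) ∧ (c : ℕ) + 1 ≤ (r : ℕ)
        ∧ (r : ℕ) + 1 ≤ (c : ℕ) + m ∧ ((c : ℕ) + 1 = (r : ℕ) → m ∣ (r : ℕ)))]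
    have hrow : ∀ r : Fin (m ^ 2),
        (Finset.univ.filter (fun c : Fin (m ^ 2) => m ≤ (r : ℕ) ∧ (c : ℕ) + 1 ≤ (r : ℕ)
          ∧ (r : ℕ) + 1 ≤ (c : ℕ) + m ∧ ((c : ℕ) + 1 = (r : ℕ) → m ∣ (r : ℕ)))).card
        = if m ≤ (r : ℕ) then (if m ∣ (r : ℕ) then m - 1 else m - 2) else 0 := by
      intro r
      rw [card_filter_fin (m ^ 2) (fun c => m ≤ (r : ℕ) ∧ c + 1 ≤ (r : ℕ)
        ∧ (r : ℕ) + 1 ≤ c + m ∧ (c + 1 = (r : ℕ) → m ∣ (r : ℕ)))]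
      exact fill_row_card m (r : ℕ) hm r.isLt
    rw [Finset.sum_congr rfl (fun r _ => hrow r)]
    rw [Fin.sum_univ_eq_sum_range (fun r => if m ≤ r then (if m ∣ r then m - 1 else m - 2) else 0)]
    exact fill_total m hm
  -- Part 2: the count of nonzero entries of A on or below the diagonal
  have part2 : {p : Fin (m ^ 2) × Fin (m ^ 2) |
      p.2 ≤ p.1 ∧ fdMatrix m ε b₀ p.1 p.2 ≠ 0}.ncard = 3 * m ^ 2 - 2 * m := by
    have hset : {p : Fin (m ^ 2) × Fin (m ^ 2) |
        p.2 ≤ p.1 ∧ fdMatrix m ε b₀ p.1 p.2 ≠ 0}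
        = ↑(Finset.univ.filter (fun p : Fin (m ^ 2) × Fin (m ^ 2) =>
            (p.2 : ℕ) ≤ (p.1 : ℕ) ∧ ((p.1 : ℕ) = (p.2 : ℕ) ∨ (p.2 : ℕ) + m = (p.1 : ℕ)
              ∨ ((p.2 : ℕ) + 1 = (p.1 : ℕ) ∧ ¬ m ∣ ((p.2 : ℕ) + 1))))) := by
      ext p
      obtain ⟨r, c⟩ := p
      simp only [Set.mem_setOf_eq, Finset.coe_filter, Finset.mem_univ, true_and]
      constructor
      · rintro ⟨hle, hfd⟩
        have hle' : (c : ℕ) ≤ (r : ℕ) := hle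
        refine ⟨hle', ?_⟩
        rcases Nat.eq_or_lt_of_le hle' with h | hlt
        · exact Or.inl h.symm
        · rw [fd_apply_lower m ε b₀ hlt] at hfd
          have hcond : (c : ℕ) + m = (r : ℕ)
              ∨ ((c : ℕ) + 1 = (r : ℕ) ∧ (r : ℕ) / m = (c : ℕ) / m) := by
            by_contra h
            rw [if_neg h] at hfd
            exact hfd rfl
          rcases hcond with h | ⟨h, hsame⟩
          · exact Or.inr (Or.inl h)
          · refine Or.inr (Or.inr ⟨h, ?_⟩)
            rw [show (r : ℕ) = (c : ℕ) + 1 from h.symm, block_iff] at hsame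
            exact hsame
      · rintro ⟨hle, hor⟩
        refine ⟨hle, ?_⟩
        rcases hor with h | h | ⟨h, hnd⟩
        · have : r = c := Fin.ext h
          rw [this]
          exact ne_of_gt (fd_diag_pos m hε hb₀ c)
        · have hlt : (c : ℕ) < (r : ℕ) := by omega
          rw [fd_apply_lower m ε b₀ hlt, if_pos (Or.inl h)]
          exact hε2
        · have hlt : (c : ℕ) < (r : ℕ) := by omega
          have hsame : (r : ℕ) / m = (c : ℕ) / m := by
            rw [show (r : ℕ) = (c : ℕ) + 1 from h.symm, block_iff]
            exact hnd
          rw [fd_apply_lower m ε b₀ hlt, if_pos (Or.inr ⟨h, hsame⟩)]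
          exact hε2
    rw [hset, Set.ncard_coe_finset,
      card_prod_filter_snd (m ^ 2) (fun r c => (c : ℕ) ≤ (r : ℕ)
        ∧ ((r : ℕ) = (c : ℕ) ∨ (c : ℕ) + m = (r : ℕ)
          ∨ ((c : ℕ) + 1 = (r : ℕ) ∧ ¬ m ∣ ((c : ℕ) + 1))))]
    have hcol : ∀ c : Fin (m ^ 2),
        (Finset.univ.filter (fun r : Fin (m ^ 2) => (c : ℕ) ≤ (r : ℕ)
          ∧ ((r : ℕ) = (c : ℕ) ∨ (c : ℕ) + m = (r : ℕ)
            ∨ ((c : ℕ) + 1 = (r : ℕ) ∧ ¬ m ∣ ((c : ℕ) + 1))))).card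
        = 1 + (if (c : ℕ) + m < m ^ 2 then 1 else 0) + (if m ∣ ((c : ℕ) + 1) then 0 else 1) := by
      intro c
      rw [card_filter_fin (m ^ 2) (fun r => (c : ℕ) ≤ r
        ∧ (r = (c : ℕ) ∨ (c : ℕ) + m = r ∨ ((c : ℕ) + 1 = r ∧ ¬ m ∣ ((c : ℕ) + 1))))]
      exact a_col_card m (c : ℕ) hm c.isLt
    rw [Finset.sum_congr rfl (fun c _ => hcol c)]
    rw [Fin.sum_univ_eq_sum_range
      (fun c => 1 + (if c + m < m ^ 2 then 1 else 0) + (if m ∣ (c + 1) then 0 else 1))]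
    exact a_total m hm
  refine ⟨part1, part2, ?_⟩
  have h1 : 1 ≤ m := by omega
  have hmn : m ≤ m ^ 2 := Nat.le_self_pow (by norm_num) m
  have h2m : 2 * m ≤ 3 * m ^ 2 := by nlinarith
  have h3 : 1 ≤ m ^ 3 + m := by omega
  zify [h1, h2m, h3]
  ring
end

section
/- For every integer k ≥ 1 and every real b₀ > 0 there exist constants C₀, C₁ > 0 (depending only on k and b₀, and in particular independent of N and ε) such that for every integer m ≥ k + 2 and every real ε with 0 < ε ≤ h, where N = m+1 and h = 1/N, the Cholesky factor L of the matrix A satisfies C₀ · ε^{2(k+1)} / h^{2k+1} ≤ |L(m+1, k+1)| ≤ C₁ · ε^{2(k+1)} / h^{2k+1}. (These are the fill-in entries of 'level k' in row m+1: their magnitude is Θ(δ^{2(k+1)} h) with δ = ε/h.) -/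
noncomputable def dseq (a e4 : ℝ) : ℕ → ℝ
  | 0 => a
  | j + 1 => a - e4 / dseq a e4 j

lemma dseq_bounds (ε hh b₀ : ℝ) (hε : 0 < ε) (hb : 0 < b₀) :
    ∀ j, 2 * ε ^ 2 + hh ^ 2 * b₀ ≤ dseq (4 * ε ^ 2 + hh ^ 2 * b₀) (ε ^ 4) j ∧
      dseq (4 * ε ^ 2 + hh ^ 2 * b₀) (ε ^ 4) j ≤ 4 * ε ^ 2 + hh ^ 2 * b₀ := by
  have hε2 : 0 < ε ^ 2 := pow_pos hε 2
  have hh2 : 0 ≤ hh ^ 2 * b₀ := mul_nonneg (sq_nonneg hh) hb.le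
  intro j
  induction j with
  | zero => constructor <;> simp [dseq] <;> nlinarith
  | succ j ih =>
    obtain ⟨h1, h2⟩ := ih
    have hd0 : 0 < dseq (4 * ε ^ 2 + hh ^ 2 * b₀) (ε ^ 4) j := by nlinarith
    have hdiv : ε ^ 4 / dseq (4 * ε ^ 2 + hh ^ 2 * b₀) (ε ^ 4) j ≤ ε ^ 2 / 2 := by
      rw [div_le_div_iff₀ hd0 (by norm_num)]; nlinarith
    have hdiv0 : 0 ≤ ε ^ 4 / dseq (4 * ε ^ 2 + hh ^ 2 * b₀) (ε ^ 4) j :=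
      div_nonneg (by positivity) hd0.le
    constructor
    · show 2 * ε ^ 2 + hh ^ 2 * b₀ ≤ (4 * ε ^ 2 + hh ^ 2 * b₀) - ε ^ 4 / _
      linarith
    · show (4 * ε ^ 2 + hh ^ 2 * b₀) - ε ^ 4 / _ ≤ _
      linarith

/- STATEMENT 4: for every k ≥ 1 and b₀ > 0 there are constants C₀, C₁ > 0,
   independent of N and ε, such that for all m ≥ k+2 and 0 < ε ≤ h = 1/(m+1),
   the fill-in entry L(m+1, k+1) (1-based; 0-based indices (m, k)) of the
   Cholesky factor of fdMatrix satisfies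
   C₀ ε^{2(k+1)}/h^{2k+1} ≤ |L(m+1,k+1)| ≤ C₁ ε^{2(k+1)}/h^{2k+1}. -/
set_option maxHeartbeats 1600000 in
theorem stmt_4 (k : ℕ) (hk : 1 ≤ k) (b₀ : ℝ) (hb₀ : 0 < b₀) :
    ∃ C₀ C₁ : ℝ, 0 < C₀ ∧ 0 < C₁ ∧
      ∀ m : ℕ, ∀ hm : k + 2 ≤ m,
      ∀ ε : ℝ, 0 < ε → ε ≤ 1 / (m + 1 : ℝ) →
      ∀ L : Matrix (Fin (m ^ 2)) (Fin (m ^ 2)) ℝ,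
        (∀ i j : Fin (m ^ 2), i < j → L i j = 0) →
        (∀ i : Fin (m ^ 2), 0 < L i i) →
        fdMatrix m ε b₀ = L * L.transpose →
        C₀ * (ε ^ (2 * (k + 1)) / (1 / (m + 1 : ℝ)) ^ (2 * k + 1)) ≤
            |L ⟨m, by nlinarith⟩ ⟨k, by nlinarith⟩| ∧
          |L ⟨m, by nlinarith⟩ ⟨k, by nlinarith⟩| ≤
            C₁ * (ε ^ (2 * (k + 1)) / (1 / (m + 1 : ℝ)) ^ (2 * k + 1)) := by
  have hB : (0:ℝ) < 4 + b₀ := by linarith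
  refine ⟨((4 + b₀) ^ (2 * k + 1))⁻¹, (1 + b₀⁻¹) ^ (2 * k + 1),
    inv_pos.mpr (pow_pos hB _), pow_pos (by positivity) _, ?_⟩
  intro m hm ε hε hεh L hLT hLD hA
  have h2m : 2 ≤ m := by omega
  have hmn : m < m ^ 2 := by nlinarith
  have hlt : ∀ j : ℕ, j ≤ m → j < m ^ 2 := fun j hj => lt_of_le_of_lt (by omega) hmn
  -- matrix entry evaluations
  have hAe : ∀ i j : Fin (m ^ 2), fdMatrix m ε b₀ i j = ∑ p, L i p * L j p := by
    intro i j; rw [hA, Matrix.mul_apply]; simp [Matrix.transpose_apply]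
  have hAzero : ∀ (j q : ℕ) (hj : j < m ^ 2) (hq : q < m ^ 2), q < j → q + 1 ≠ j →
      q + m ≠ j → fdMatrix m ε b₀ ⟨j, hj⟩ ⟨q, hq⟩ = 0 := by
    intro j q hj hq h1 h2 h3
    simp only [fdMatrix, Fin.mk.injEq, Fin.val_mk]
    rw [if_neg (by omega), if_neg (by rintro (h | h) <;> omega),
      if_neg (by rintro ⟨h | h, -⟩ <;> omega)]
  have hAdiag : ∀ (j : ℕ) (hj : j < m ^ 2), fdMatrix m ε b₀ ⟨j, hj⟩ ⟨j, hj⟩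
      = 4 * ε ^ 2 + (1 / (m + 1) : ℝ) ^ 2 * b₀ := by
    intro j hj; simp [fdMatrix]
  have hAadj : ∀ (j : ℕ), j + 1 < m → ∀ (hj : j < m ^ 2) (hj1 : j + 1 < m ^ 2),
      fdMatrix m ε b₀ ⟨j, hj⟩ ⟨j + 1, hj1⟩ = -ε ^ 2 := by
    intro j hjm hj hj1
    have e1 : j / m = 0 := Nat.div_eq_of_lt (by omega)
    have e2 : (j + 1) / m = 0 := Nat.div_eq_of_lt (by omega)
    simp only [fdMatrix, Fin.mk.injEq, Fin.val_mk]
    rw [if_neg (by omega), if_neg (by rintro (h | h) <;> omega), if_pos]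
    simp [e1, e2]
  have hAm0 : ∀ (h0n : 0 < m ^ 2), fdMatrix m ε b₀ ⟨m, hmn⟩ ⟨0, h0n⟩ = -ε ^ 2 := by
    intro h0n
    simp only [fdMatrix, Fin.mk.injEq, Fin.val_mk]
    rw [if_neg (by omega), if_pos (Or.inr (by omega))]
  -- zero structure of rows 0..m-1
  have ZS : ∀ j, j < m → ∀ q, q + 1 < j → ∀ (hjn : j < m ^ 2) (hqn : q < m ^ 2),
      L ⟨j, hjn⟩ ⟨q, hqn⟩ = 0 := by
    intro j hjm q
    induction q using Nat.strong_induction_on with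
    | _ q ihq =>
      intro hq hjn hqn
      have hAq : fdMatrix m ε b₀ ⟨j, hjn⟩ ⟨q, hqn⟩ = 0 :=
        hAzero j q hjn hqn (by omega) (by omega) (by omega)
      rw [hAe] at hAq
      have hsingle : ∑ p, L ⟨j, hjn⟩ p * L ⟨q, hqn⟩ p
          = L ⟨j, hjn⟩ ⟨q, hqn⟩ * L ⟨q, hqn⟩ ⟨q, hqn⟩ := by
        apply Finset.sum_eq_single
        · intro p _ hp
          have hpq : (p : ℕ) ≠ q := fun h => hp (Fin.ext h)
          rcases lt_or_gt_of_ne hpq with hlt' | hgt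
          · have h0 := ihq p.val hlt' (by omega) hjn p.2
            rw [Fin.eta] at h0
            rw [h0, zero_mul]
          · rw [hLT ⟨q, hqn⟩ p (by simpa [Fin.lt_def] using hgt), mul_zero]
        · intro h; exact absurd (Finset.mem_univ _) h
      rw [hsingle] at hAq
      exact (mul_eq_zero.mp hAq).resolve_right (ne_of_gt (hLD _))
  -- sum over row 0
  have sum0 : ∀ (i : Fin (m ^ 2)) (h0n : 0 < m ^ 2),
      ∑ p, L i p * L ⟨0, h0n⟩ p = L i ⟨0, h0n⟩ * L ⟨0, h0n⟩ ⟨0, h0n⟩ := by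
    intro i h0n
    apply Finset.sum_eq_single
    · intro p _ hp
      have h0 : (0 : ℕ) < p.val := Nat.pos_of_ne_zero (fun h => hp (Fin.ext h))
      rw [hLT ⟨0, h0n⟩ p (by simpa [Fin.lt_def] using h0), mul_zero]
    · intro h; exact absurd (Finset.mem_univ _) h
  -- pair sum over row j+1 (for j+1 < m)
  have pairsum : ∀ (i : Fin (m ^ 2)) (j : ℕ), j + 1 < m →
      ∀ (hjn : j < m ^ 2) (hj1n : j + 1 < m ^ 2),
      ∑ p, L i p * L ⟨j + 1, hj1n⟩ p
        = L i ⟨j, hjn⟩ * L ⟨j + 1, hj1n⟩ ⟨j, hjn⟩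
          + L i ⟨j + 1, hj1n⟩ * L ⟨j + 1, hj1n⟩ ⟨j + 1, hj1n⟩ := by
    intro i j hj1 hjn hj1n
    have hne : (⟨j, hjn⟩ : Fin (m ^ 2)) ≠ ⟨j + 1, hj1n⟩ := by
      simp [Fin.ext_iff]
    have key : ∑ p ∈ ({⟨j, hjn⟩, ⟨j + 1, hj1n⟩} : Finset (Fin (m ^ 2))),
        L i p * L ⟨j + 1, hj1n⟩ p = ∑ p, L i p * L ⟨j + 1, hj1n⟩ p := by
      apply Finset.sum_subset (Finset.subset_univ _)
      intro p _ hp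
      simp only [Finset.mem_insert, Finset.mem_singleton] at hp
      push_neg at hp
      obtain ⟨h1, h2⟩ := hp
      have h1' : (p : ℕ) ≠ j := fun h => h1 (Fin.ext h)
      have h2' : (p : ℕ) ≠ j + 1 := fun h => h2 (Fin.ext h)
      rcases lt_or_gt_of_ne h2' with hlt' | hgt
      · have hpj : (p : ℕ) < j := by omega
        have h0 := ZS (j + 1) hj1 p.val (by omega) hj1n p.2
        rw [Fin.eta] at h0
        rw [h0, mul_zero]
      · rw [hLT ⟨j + 1, hj1n⟩ p (by simpa [Fin.lt_def] using hgt), mul_zero]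
    rw [← key, Finset.sum_pair hne]
  -- subdiagonal relation
  have hsub : ∀ j, j + 1 < m → ∀ (hjn : j < m ^ 2) (hj1n : j + 1 < m ^ 2),
      L ⟨j + 1, hj1n⟩ ⟨j, hjn⟩ * L ⟨j, hjn⟩ ⟨j, hjn⟩ = -ε ^ 2 := by
    intro j hj1 hjn hj1n
    have hAq := hAe ⟨j, hjn⟩ ⟨j + 1, hj1n⟩
    rw [hAadj j hj1 hjn hj1n] at hAq
    have hsingle : ∑ p, L ⟨j, hjn⟩ p * L ⟨j + 1, hj1n⟩ p
        = L ⟨j, hjn⟩ ⟨j, hjn⟩ * L ⟨j + 1, hj1n⟩ ⟨j, hjn⟩ := by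
      apply Finset.sum_eq_single
      · intro p _ hp
        have hpq : (p : ℕ) ≠ j := fun h => hp (Fin.ext h)
        rcases lt_or_gt_of_ne hpq with hlt' | hgt
        · have h0 := ZS (j + 1) hj1 p.val (by omega) hj1n p.2
          rw [Fin.eta] at h0
          rw [h0, mul_zero]
        · rw [hLT ⟨j, hjn⟩ p (by simpa [Fin.lt_def] using hgt), zero_mul]
      · intro h; exact absurd (Finset.mem_univ _) h
    rw [hsingle] at hAq
    linarith [hAq]
  -- the recursively defined diagonal squares
  have hε2 : 0 < ε ^ 2 := pow_pos hε 2
  have hH : (0:ℝ) < 1 / (m + 1 : ℝ) := by positivity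
  have hdlb : ∀ j, 2 * ε ^ 2 + (1 / (m + 1 : ℝ)) ^ 2 * b₀ ≤
      dseq (4 * ε ^ 2 + (1 / (m + 1 : ℝ)) ^ 2 * b₀) (ε ^ 4) j :=
    fun j => (dseq_bounds ε (1 / (m + 1 : ℝ)) b₀ hε hb₀ j).1
  have hdub : ∀ j, dseq (4 * ε ^ 2 + (1 / (m + 1 : ℝ)) ^ 2 * b₀) (ε ^ 4) j ≤
      4 * ε ^ 2 + (1 / (m + 1 : ℝ)) ^ 2 * b₀ :=
    fun j => (dseq_bounds ε (1 / (m + 1 : ℝ)) b₀ hε hb₀ j).2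
  have hdpos : ∀ j, 0 < dseq (4 * ε ^ 2 + (1 / (m + 1 : ℝ)) ^ 2 * b₀) (ε ^ 4) j := by
    intro j
    have := hdlb j
    nlinarith [sq_nonneg (1 / (m + 1 : ℝ)), mul_nonneg (sq_nonneg (1 / (m + 1 : ℝ))) hb₀.le]
  have DS : ∀ j, j ≤ k → ∀ hjn : j < m ^ 2, (L ⟨j, hjn⟩ ⟨j, hjn⟩) ^ 2
      = dseq (4 * ε ^ 2 + (1 / (m + 1 : ℝ)) ^ 2 * b₀) (ε ^ 4) j := by
    intro j
    induction j with
    | zero =>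
      intro _ h0n
      have hAq := hAe ⟨0, h0n⟩ ⟨0, h0n⟩
      rw [hAdiag, sum0] at hAq
      simp only [dseq]
      rw [sq]
      linarith [hAq]
    | succ j ih =>
      intro hjk hj1n
      have hjn : j < m ^ 2 := hlt j (by omega)
      have hj1m : j + 1 < m := by omega
      have hdj := ih (by omega) hjn
      have hs := hsub j hj1m hjn hj1n
      have hAd := hAe ⟨j + 1, hj1n⟩ ⟨j + 1, hj1n⟩
      rw [hAdiag, pairsum ⟨j + 1, hj1n⟩ j hj1m hjn hj1n] at hAd
      have hdjpos := hdpos j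
      have e : ε ^ 4 / dseq (4 * ε ^ 2 + (1 / (m + 1 : ℝ)) ^ 2 * b₀) (ε ^ 4) j
          = L ⟨j + 1, hj1n⟩ ⟨j, hjn⟩ ^ 2 := by
        rw [div_eq_iff (ne_of_gt hdjpos)]
        linear_combination (ε ^ 2 - L ⟨j + 1, hj1n⟩ ⟨j, hjn⟩ * L ⟨j, hjn⟩ ⟨j, hjn⟩) * hs
          + (L ⟨j + 1, hj1n⟩ ⟨j, hjn⟩) ^ 2 * hdj
      simp only [dseq]
      linear_combination -hAd + e
  -- the fill-in product identity for row m
  have EM : ∀ p, p ≤ k → ∀ hpn : p < m ^ 2,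
      L ⟨m, hmn⟩ ⟨p, hpn⟩ * L ⟨p, hpn⟩ ⟨p, hpn⟩ *
        ∏ j ∈ Finset.range p, dseq (4 * ε ^ 2 + (1 / (m + 1 : ℝ)) ^ 2 * b₀) (ε ^ 4) j
      = -(ε ^ 2) ^ (p + 1) := by
    intro p
    induction p with
    | zero =>
      intro _ h0n
      have hAq := hAe ⟨m, hmn⟩ ⟨0, h0n⟩
      rw [hAm0, sum0] at hAq
      simp only [Finset.range_zero, Finset.prod_empty, mul_one, zero_add, pow_one]
      linarith [hAq]
    | succ p ih =>
      intro hpk hp1n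
      have hpn : p < m ^ 2 := hlt p (by omega)
      have hp1m : p + 1 < m := by omega
      have hAq : fdMatrix m ε b₀ ⟨m, hmn⟩ ⟨p + 1, hp1n⟩ = 0 :=
        hAzero m (p + 1) hmn hp1n (by omega) (by omega) (by omega)
      rw [hAe, pairsum ⟨m, hmn⟩ p hp1m hpn hp1n] at hAq
      have hs := hsub p hp1m hpn hp1n
      have hdp := DS p (by omega) hpn
      have ihp := ih (by omega) hpn
      rw [Finset.prod_range_succ]
      linear_combination
        ((∏ j ∈ Finset.range p, dseq (4 * ε ^ 2 + (1 / (m + 1 : ℝ)) ^ 2 * b₀) (ε ^ 4) j)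
            * dseq (4 * ε ^ 2 + (1 / (m + 1 : ℝ)) ^ 2 * b₀) (ε ^ 4) p) * hAq
        + ε ^ 2 * ihp
        - (L ⟨m, hmn⟩ ⟨p, hpn⟩
            * (∏ j ∈ Finset.range p, dseq (4 * ε ^ 2 + (1 / (m + 1 : ℝ)) ^ 2 * b₀) (ε ^ 4) j)
            * L ⟨p, hpn⟩ ⟨p, hpn⟩) * hs
        + (L ⟨m, hmn⟩ ⟨p, hpn⟩
            * (∏ j ∈ Finset.range p, dseq (4 * ε ^ 2 + (1 / (m + 1 : ℝ)) ^ 2 * b₀) (ε ^ 4) j)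
            * L ⟨p + 1, hp1n⟩ ⟨p, hpn⟩) * hdp
  -- final assembly
  have hkn : k < m ^ 2 := hlt k (by omega)
  have hEk := EM k le_rfl hkn
  have hdk := DS k (by omega) hkn
  have hPpos : (0:ℝ) < ∏ j ∈ Finset.range k,
      dseq (4 * ε ^ 2 + (1 / (m + 1 : ℝ)) ^ 2 * b₀) (ε ^ 4) j :=
    Finset.prod_pos fun j _ => hdpos j
  have hu : 0 < L ⟨k, hkn⟩ ⟨k, hkn⟩ := hLD _
  obtain ⟨D, hD⟩ : ∃ D, D = dseq (4 * ε ^ 2 + (1 / (m + 1 : ℝ)) ^ 2 * b₀) (ε ^ 4) k := ⟨_, rfl⟩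
  obtain ⟨P, hP⟩ : ∃ P, P = ∏ j ∈ Finset.range k,
      dseq (4 * ε ^ 2 + (1 / (m + 1 : ℝ)) ^ 2 * b₀) (ε ^ 4) j := ⟨_, rfl⟩
  rw [← hD] at hdk
  rw [← hP] at hEk hPpos
  have hDpos : 0 < D := by rw [hD]; exact hdpos k
  have hH2 : ε ^ 2 ≤ (1 / (m + 1 : ℝ)) ^ 2 := pow_le_pow_left₀ hε.le hεh 2
  have hDlb : b₀ * (1 / (m + 1 : ℝ)) ^ 2 ≤ D := by
    rw [hD]; have := hdlb k; nlinarith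
  have hDub : D ≤ (4 + b₀) * (1 / (m + 1 : ℝ)) ^ 2 := by
    rw [hD]; have := hdub k; nlinarith
  have hclb : (0:ℝ) ≤ b₀ * (1 / (m + 1 : ℝ)) ^ 2 := mul_nonneg hb₀.le (sq_nonneg _)
  have hcub : (0:ℝ) ≤ (4 + b₀) * (1 / (m + 1 : ℝ)) ^ 2 := mul_nonneg hB.le (sq_nonneg _)
  have hPlb : (b₀ * (1 / (m + 1 : ℝ)) ^ 2) ^ k ≤ P := by
    rw [hP]
    calc (b₀ * (1 / (m + 1 : ℝ)) ^ 2) ^ k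
        = ∏ _j ∈ Finset.range k, (b₀ * (1 / (m + 1 : ℝ)) ^ 2) := by
          rw [Finset.prod_const, Finset.card_range]
      _ ≤ ∏ j ∈ Finset.range k, dseq (4 * ε ^ 2 + (1 / (m + 1 : ℝ)) ^ 2 * b₀) (ε ^ 4) j := by
          apply Finset.prod_le_prod (fun j _ => hclb)
          intro j _; have := hdlb j; nlinarith
  have hPub : P ≤ ((4 + b₀) * (1 / (m + 1 : ℝ)) ^ 2) ^ k := by
    rw [hP]
    calc ∏ j ∈ Finset.range k, dseq (4 * ε ^ 2 + (1 / (m + 1 : ℝ)) ^ 2 * b₀) (ε ^ 4) j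
        ≤ ∏ _j ∈ Finset.range k, ((4 + b₀) * (1 / (m + 1 : ℝ)) ^ 2) := by
          apply Finset.prod_le_prod (fun j _ => (hdpos j).le)
          intro j _; have := hdub j; nlinarith
      _ = ((4 + b₀) * (1 / (m + 1 : ℝ)) ^ 2) ^ k := by
          rw [Finset.prod_const, Finset.card_range]
  have hT : ε ^ (2 * (k + 1)) = (ε ^ 2) ^ (k + 1) := pow_mul ε 2 (k + 1)
  have huP : 0 < L ⟨k, hkn⟩ ⟨k, hkn⟩ * P := mul_pos hu hPpos
  have hxuP : |L ⟨m, hmn⟩ ⟨k, hkn⟩| * (L ⟨k, hkn⟩ ⟨k, hkn⟩ * P) = (ε ^ 2) ^ (k + 1) := by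
    rw [← abs_of_pos huP, ← abs_mul, ← mul_assoc, hEk, abs_neg,
      abs_of_nonneg (by positivity)]
  have hx2 : |L ⟨m, hmn⟩ ⟨k, hkn⟩| ^ 2 * (D * P ^ 2) = ((ε ^ 2) ^ (k + 1)) ^ 2 := by
    linear_combination (-(|L ⟨m, hmn⟩ ⟨k, hkn⟩| ^ 2 * P ^ 2)) * hdk
      + (|L ⟨m, hmn⟩ ⟨k, hkn⟩| * (L ⟨k, hkn⟩ ⟨k, hkn⟩ * P) + (ε ^ 2) ^ (k + 1)) * hxuP
  have hSpos : 0 < D * P ^ 2 := mul_pos hDpos (pow_pos hPpos 2)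
  have habs : |L ⟨m, hmn⟩ ⟨k, hkn⟩| ^ 2 = ((ε ^ 2) ^ (k + 1)) ^ 2 / (D * P ^ 2) :=
    (eq_div_iff hSpos.ne').mpr hx2
  have hQpos : (0:ℝ) < (1 / (m + 1 : ℝ)) ^ (2 * k + 1) := pow_pos hH _
  have hhi : ((4 + b₀) * (1 / (m + 1 : ℝ)) ^ 2) ^ (2 * k + 1)
      = (4 + b₀) ^ (2 * k + 1) * ((1 / (m + 1 : ℝ)) ^ (2 * k + 1)) ^ 2 := by
    rw [mul_pow, ← pow_mul, mul_comm 2 (2 * k + 1), pow_mul]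
  have hlo : (b₀ * (1 / (m + 1 : ℝ)) ^ 2) ^ (2 * k + 1)
      = b₀ ^ (2 * k + 1) * ((1 / (m + 1 : ℝ)) ^ (2 * k + 1)) ^ 2 := by
    rw [mul_pow, ← pow_mul, mul_comm 2 (2 * k + 1), pow_mul]
  have hShi : D * P ^ 2 ≤ (4 + b₀) ^ (2 * k + 1) * ((1 / (m + 1 : ℝ)) ^ (2 * k + 1)) ^ 2 := by
    rw [← hhi]
    calc D * P ^ 2 ≤ ((4 + b₀) * (1 / (m + 1 : ℝ)) ^ 2)
        * (((4 + b₀) * (1 / (m + 1 : ℝ)) ^ 2) ^ k) ^ 2 := by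
          apply mul_le_mul hDub (pow_le_pow_left₀ hPpos.le hPub 2) (pow_nonneg hPpos.le 2) hcub
      _ = ((4 + b₀) * (1 / (m + 1 : ℝ)) ^ 2) ^ (2 * k + 1) := by ring
  have hSlo : b₀ ^ (2 * k + 1) * ((1 / (m + 1 : ℝ)) ^ (2 * k + 1)) ^ 2 ≤ D * P ^ 2 := by
    rw [← hlo]
    calc (b₀ * (1 / (m + 1 : ℝ)) ^ 2) ^ (2 * k + 1)
        = (b₀ * (1 / (m + 1 : ℝ)) ^ 2) * ((b₀ * (1 / (m + 1 : ℝ)) ^ 2) ^ k) ^ 2 := by ring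
      _ ≤ D * P ^ 2 := by
          apply mul_le_mul hDlb (pow_le_pow_left₀ (pow_nonneg hclb k) hPlb 2)
            (pow_nonneg (pow_nonneg hclb k) 2) hDpos.le
  have hBpow : (1:ℝ) ≤ (4 + b₀) ^ (2 * k + 1) := by
    calc (1:ℝ) = 1 ^ (2 * k + 1) := (one_pow _).symm
      _ ≤ (4 + b₀) ^ (2 * k + 1) := pow_le_pow_left₀ zero_le_one (by linarith) _
  have hBne : ((4 + b₀) ^ (2 * k + 1) : ℝ) ≠ 0 := by positivity
  have hQne : ((1 / (m + 1 : ℝ)) ^ (2 * k + 1)) ≠ 0 := hQpos.ne'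
  have h1b : (1:ℝ) ≤ 1 + b₀⁻¹ := le_add_of_nonneg_right (inv_nonneg.mpr hb₀.le)
  have h3b : (1:ℝ) ≤ (1 + b₀⁻¹) ^ (2 * k + 1) := by
    calc (1:ℝ) = 1 ^ (2 * k + 1) := (one_pow _).symm
      _ ≤ (1 + b₀⁻¹) ^ (2 * k + 1) := pow_le_pow_left₀ zero_le_one h1b _
  have h2b : (b₀⁻¹) ^ (2 * k + 1) ≤ (1 + b₀⁻¹) ^ (2 * k + 1) :=
    pow_le_pow_left₀ (inv_nonneg.mpr hb₀.le) (by linarith) _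
  have hbpow : (0:ℝ) < b₀ ^ (2 * k + 1) := pow_pos hb₀ _
  have hc1a : (b₀ ^ (2 * k + 1))⁻¹ ≤ ((1 + b₀⁻¹) ^ (2 * k + 1)) ^ 2 := by
    rw [← inv_pow]
    nlinarith [h2b, h3b, pow_nonneg (inv_nonneg.mpr hb₀.le) (2 * k + 1)]
  have h1C : 1 ≤ ((1 + b₀⁻¹) ^ (2 * k + 1)) ^ 2 * b₀ ^ (2 * k + 1) := by
    have h := mul_le_mul_of_nonneg_right hc1a hbpow.le
    rwa [inv_mul_cancel₀ hbpow.ne'] at h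
  show ((4 + b₀) ^ (2 * k + 1))⁻¹
        * (ε ^ (2 * (k + 1)) / (1 / (m + 1 : ℝ)) ^ (2 * k + 1)) ≤ |L ⟨m, hmn⟩ ⟨k, hkn⟩|
      ∧ |L ⟨m, hmn⟩ ⟨k, hkn⟩| ≤ (1 + b₀⁻¹) ^ (2 * k + 1)
        * (ε ^ (2 * (k + 1)) / (1 / (m + 1 : ℝ)) ^ (2 * k + 1))
  rw [hT]
  constructor
  · have hC0Xnn : (0:ℝ) ≤ ((4 + b₀) ^ (2 * k + 1))⁻¹
        * ((ε ^ 2) ^ (k + 1) / (1 / (m + 1 : ℝ)) ^ (2 * k + 1)) := by positivity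
    refine (pow_le_pow_iff_left₀ hC0Xnn (abs_nonneg _) two_ne_zero).mp ?_
    rw [habs, le_div_iff₀ hSpos]
    calc (((4 + b₀) ^ (2 * k + 1))⁻¹
          * ((ε ^ 2) ^ (k + 1) / (1 / (m + 1 : ℝ)) ^ (2 * k + 1))) ^ 2 * (D * P ^ 2)
        ≤ (((4 + b₀) ^ (2 * k + 1))⁻¹
          * ((ε ^ 2) ^ (k + 1) / (1 / (m + 1 : ℝ)) ^ (2 * k + 1))) ^ 2
          * ((4 + b₀) ^ (2 * k + 1) * ((1 / (m + 1 : ℝ)) ^ (2 * k + 1)) ^ 2) :=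
          mul_le_mul_of_nonneg_left hShi (sq_nonneg _)
      _ = ((4 + b₀) ^ (2 * k + 1))⁻¹ * ((ε ^ 2) ^ (k + 1)) ^ 2 := by
          field_simp
      _ ≤ ((ε ^ 2) ^ (k + 1)) ^ 2 := by
          apply mul_le_of_le_one_left (sq_nonneg _)
          exact inv_le_one_of_one_le₀ hBpow
  · refine (pow_le_pow_iff_left₀ (abs_nonneg _) (by positivity) two_ne_zero).mp ?_
    rw [habs, div_le_iff₀ hSpos]
    calc ((ε ^ 2) ^ (k + 1)) ^ 2
        ≤ (((1 + b₀⁻¹) ^ (2 * k + 1)) ^ 2 * b₀ ^ (2 * k + 1)) * ((ε ^ 2) ^ (k + 1)) ^ 2 :=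
          le_mul_of_one_le_left (sq_nonneg _) h1C
      _ = ((1 + b₀⁻¹) ^ (2 * k + 1)
          * ((ε ^ 2) ^ (k + 1) / (1 / (m + 1 : ℝ)) ^ (2 * k + 1))) ^ 2
          * (b₀ ^ (2 * k + 1) * ((1 / (m + 1 : ℝ)) ^ (2 * k + 1)) ^ 2) := by
          field_simp
      _ ≤ ((1 + b₀⁻¹) ^ (2 * k + 1)
          * ((ε ^ 2) ^ (k + 1) / (1 / (m + 1 : ℝ)) ^ (2 * k + 1))) ^ 2 * (D * P ^ 2) :=
          mul_le_mul_of_nonneg_left hSlo (sq_nonneg _)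
end

section
/- Fix an integer m ≥ 3, set N = m+1 and h = 1/N, and let ε > 0 and b₀ > 0. Let L be the Cholesky factor of the matrix A. Then for every integer j with 2 ≤ j ≤ m−1, the fill-in entries in row m+1 satisfy the exact recurrence L(m+1, j+1) = − L(m+1, j) · L(j+1, j) / L(j+1, j+1). -/
lemma fd_off (m : ℕ) (ε b₀ : ℝ) (r c : Fin (m ^ 2))
    (h1 : (r : ℕ) ≠ (c : ℕ)) (h2 : (r : ℕ) + m ≠ (c : ℕ)) (h3 : (c : ℕ) + m ≠ (r : ℕ))
    (h4 : ¬(((r : ℕ) + 1 = (c : ℕ) ∨ (c : ℕ) + 1 = (r : ℕ))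
        ∧ (r : ℕ) / m = (c : ℕ) / m)) :
    fdMatrix m ε b₀ r c = 0 := by
  unfold fdMatrix
  rw [if_neg (by simp [Fin.ext_iff]; exact h1), if_neg (by tauto), if_neg h4]

lemma chol_band (m : ℕ) (hm : 3 ≤ m) (ε b₀ : ℝ)
    (L : Matrix (Fin (m ^ 2)) (Fin (m ^ 2)) ℝ)
    (hL_tri : ∀ i j : Fin (m ^ 2), i < j → L i j = 0)
    (hL_diag : ∀ i : Fin (m ^ 2), 0 < L i i)
    (hL_fac : fdMatrix m ε b₀ = L * L.transpose) :
    ∀ n : ℕ, ∀ j k : Fin (m ^ 2), (k : ℕ) = n → (j : ℕ) < m → (k : ℕ) + 2 ≤ (j : ℕ) →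
      L j k = 0 := by
  intro n
  induction n using Nat.strong_induction_on with
  | _ n ih =>
    intro j k hkn hjm hkj
    have hA : fdMatrix m ε b₀ j k = 0 := by
      apply fd_off <;> try omega
      all_goals rintro ⟨h | h, _⟩ <;> omega
    rw [hL_fac, Matrix.mul_apply] at hA
    simp only [Matrix.transpose_apply] at hA
    rw [Finset.sum_eq_single k] at hA
    · have hk := hL_diag k
      rcases mul_eq_zero.mp hA with h | h
      · exact h
      · linarith
    · intro b _ hb
      rcases lt_or_gt_of_ne (fun h : (b : ℕ) = (k : ℕ) => hb (Fin.ext h)) with h | h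
      · rw [ih (b : ℕ) (by omega) j b rfl hjm (by omega)]; ring
      · rw [hL_tri k b (by exact h)]; ring
    · intro h; exact absurd (Finset.mem_univ k) h

theorem stmt_7 (m : ℕ) (hm : 3 ≤ m) (ε b₀ : ℝ) (hε : 0 < ε) (hb₀ : 0 < b₀)
    (L : Matrix (Fin (m ^ 2)) (Fin (m ^ 2)) ℝ)
    (hL_tri : ∀ i j : Fin (m ^ 2), i < j → L i j = 0)
    (hL_diag : ∀ i : Fin (m ^ 2), 0 < L i i)
    (hL_fac : fdMatrix m ε b₀ = L * L.transpose) :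
    ∀ j : ℕ, ∀ hj2 : 2 ≤ j, ∀ hjm : j ≤ m - 1,
      L ⟨m, by nlinarith⟩ ⟨j, by nlinarith [Nat.sub_le m 1]⟩ =
        -L ⟨m, by nlinarith⟩ ⟨j - 1, by nlinarith [Nat.sub_le m 1, Nat.sub_le j 1]⟩
          * L ⟨j, by nlinarith [Nat.sub_le m 1]⟩
              ⟨j - 1, by nlinarith [Nat.sub_le m 1, Nat.sub_le j 1]⟩
          / L ⟨j, by nlinarith [Nat.sub_le m 1]⟩ ⟨j, by nlinarith [Nat.sub_le m 1]⟩ := by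
  intro j hj2 hjm
  have hmm : m < m ^ 2 := by nlinarith
  have hjmm : j < m ^ 2 := by nlinarith [Nat.sub_le m 1]
  have hj1mm : j - 1 < m ^ 2 := by omega
  set M : Fin (m ^ 2) := ⟨m, hmm⟩ with hM
  set J : Fin (m ^ 2) := ⟨j, hjmm⟩ with hJ
  set J1 : Fin (m ^ 2) := ⟨j - 1, hj1mm⟩ with hJ1
  have hA : fdMatrix m ε b₀ M J = 0 := by
    apply fd_off
    · simp [hM, hJ]; omega
    · simp [hM, hJ]; omega
    · simp [hM, hJ]; omega
    · simp only [hM, hJ]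
      rintro ⟨h | h, hdiv⟩
      · omega
      · have h1 : j / m = 0 := Nat.div_eq_of_lt (by omega)
        have h2 : m / m = 1 := Nat.div_self (by omega)
        omega
  rw [hL_fac, Matrix.mul_apply] at hA
  simp only [Matrix.transpose_apply] at hA
  have hne : J1 ≠ J := by simp [hJ, hJ1, Fin.ext_iff]; omega
  have hpair : ∑ l, L M l * L J l = L M J1 * L J J1 + L M J * L J J := by
    rw [← Finset.sum_subset (Finset.subset_univ {J1, J})]
    · rw [Finset.sum_pair hne]
    · intro x _ hx
      simp only [Finset.mem_insert, Finset.mem_singleton] at hx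
      push_neg at hx
      obtain ⟨hx1, hx2⟩ := hx
      have hx1' : (x : ℕ) ≠ j - 1 := fun h => hx1 (Fin.ext h)
      have hx2' : (x : ℕ) ≠ j := fun h => hx2 (Fin.ext h)
      rcases lt_or_gt_of_ne hx2' with h | h
      · rw [chol_band m hm ε b₀ L hL_tri hL_diag hL_fac (x : ℕ) J x rfl
          (by omega : j < m) (by omega : (x : ℕ) + 2 ≤ j)]
        ring
      · rw [hL_tri J x (by exact h)]; ring
  rw [hpair] at hA
  have hd := hL_diag J
  field_simp
  linarith [hA]
end

section
/- Fix an integer m ≥ 2, set N = m+1 and h = 1/N, let b₀ > 0, and let ε satisfy 0 < ε ≤ h. Then every diagonal entry of the Cholesky factor L of the matrix A satisfies h·√b₀ ≤ L(r,r) ≤ h·√(4 + b₀) for all 1 ≤ r ≤ m²; in particular each diagonal entry of L is Θ(h), with constants independent of N and ε. -/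
/- STATEMENT 8: for 0 < ε ≤ h = 1/(m+1), every diagonal entry of the Cholesky
   factor L of fdMatrix satisfies h·√b₀ ≤ L(r,r) ≤ h·√(4 + b₀). -/
open Matrix

/-- The off-diagonal part of `fdMatrix`. -/
noncomputable def fdOff (m : ℕ) (ε b₀ : ℝ) (i j : Fin (m ^ 2)) : ℝ :=
  if i = j then 0 else fdMatrix m ε b₀ i j

lemma fd_symm (m : ℕ) (ε b₀ : ℝ) (i j : Fin (m ^ 2)) :
    fdMatrix m ε b₀ i j = fdMatrix m ε b₀ j i := by
  unfold fdMatrix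
  have h1 : (i = j) ↔ (j = i) := eq_comm
  have h2 : ((i : ℕ) + m = (j : ℕ) ∨ (j : ℕ) + m = (i : ℕ)) ↔
      ((j : ℕ) + m = (i : ℕ) ∨ (i : ℕ) + m = (j : ℕ)) := or_comm
  have h3 : (((i : ℕ) + 1 = (j : ℕ) ∨ (j : ℕ) + 1 = (i : ℕ)) ∧ (i : ℕ) / m = (j : ℕ) / m) ↔
      (((j : ℕ) + 1 = (i : ℕ) ∨ (i : ℕ) + 1 = (j : ℕ)) ∧ (j : ℕ) / m = (i : ℕ) / m) := by
    constructor <;> rintro ⟨a, b⟩ <;> exact ⟨a.symm, b.symm⟩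
  simp only [h1, h2, h3]

lemma fdOff_symm (m : ℕ) (ε b₀ : ℝ) (i j : Fin (m ^ 2)) :
    fdOff m ε b₀ i j = fdOff m ε b₀ j i := by
  unfold fdOff
  by_cases h : i = j
  · simp [h]
  · rw [if_neg h, if_neg (Ne.symm h)]
    exact fd_symm m ε b₀ i j

lemma fdOff_abs {m : ℕ} {ε : ℝ} (b₀ : ℝ) (i j : Fin (m ^ 2)) :
    |fdOff m ε b₀ i j| ≤ if ((i : ℕ) + m = (j : ℕ) ∨ (j : ℕ) + m = (i : ℕ)
      ∨ (i : ℕ) + 1 = (j : ℕ) ∨ (j : ℕ) + 1 = (i : ℕ)) then ε ^ 2 else 0 := by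
  unfold fdOff fdMatrix
  by_cases h : i = j
  · rw [if_pos h, abs_zero]
    split_ifs
    · exact sq_nonneg ε
    · exact le_refl 0
  rw [if_neg h, if_neg h]
  split_ifs with h1 h2 h3 h4 h5 <;>
    first
      | (exfalso; tauto)
      | (simp [abs_of_nonneg (sq_nonneg ε), sq_nonneg ε]; done)

lemma nbr_card {m : ℕ} (i : Fin (m ^ 2)) :
    (Finset.univ.filter (fun j : Fin (m ^ 2) => (i : ℕ) + m = (j : ℕ)
      ∨ (j : ℕ) + m = (i : ℕ) ∨ (i : ℕ) + 1 = (j : ℕ) ∨ (j : ℕ) + 1 = (i : ℕ))).card ≤ 4 := by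
  have hsub : ∀ j ∈ (Finset.univ.filter (fun j : Fin (m ^ 2) => (i : ℕ) + m = (j : ℕ)
      ∨ (j : ℕ) + m = (i : ℕ) ∨ (i : ℕ) + 1 = (j : ℕ) ∨ (j : ℕ) + 1 = (i : ℕ))),
      (j : ℕ) ∈ ({(i : ℕ) + m, (i : ℕ) - m, (i : ℕ) + 1, (i : ℕ) - 1} : Finset ℕ) := by
    intro j hj
    simp only [Finset.mem_filter, Finset.mem_univ, true_and] at hj
    simp only [Finset.mem_insert, Finset.mem_singleton]
    omega
  calc _ ≤ ({(i : ℕ) + m, (i : ℕ) - m, (i : ℕ) + 1, (i : ℕ) - 1} : Finset ℕ).card :=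
        Finset.card_le_card_of_injOn Fin.val hsub (Fin.val_injective.injOn)
    _ ≤ 4 := by
        apply le_trans (Finset.card_insert_le _ _)
        have h1 := Finset.card_insert_le ((i : ℕ) - m) ({(i : ℕ) + 1, (i : ℕ) - 1} : Finset ℕ)
        have h2 := Finset.card_insert_le ((i : ℕ) + 1) ({(i : ℕ) - 1} : Finset ℕ)
        simp only [Finset.card_singleton] at *
        omega

lemma fd_row_sum {m : ℕ} {ε : ℝ} (b₀ : ℝ) (i : Fin (m ^ 2)) :
    ∑ j, |fdOff m ε b₀ i j| ≤ 4 * ε ^ 2 := by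
  calc ∑ j, |fdOff m ε b₀ i j|
      ≤ ∑ j : Fin (m ^ 2), (if ((i : ℕ) + m = (j : ℕ) ∨ (j : ℕ) + m = (i : ℕ)
        ∨ (i : ℕ) + 1 = (j : ℕ) ∨ (j : ℕ) + 1 = (i : ℕ)) then ε ^ 2 else 0) :=
        Finset.sum_le_sum fun j _ => fdOff_abs b₀ i j
    _ = (Finset.univ.filter (fun j : Fin (m ^ 2) => (i : ℕ) + m = (j : ℕ)
        ∨ (j : ℕ) + m = (i : ℕ) ∨ (i : ℕ) + 1 = (j : ℕ) ∨ (j : ℕ) + 1 = (i : ℕ))).card * ε ^ 2 := by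
        rw [← Finset.sum_filter, Finset.sum_const, nsmul_eq_mul]
    _ ≤ 4 * ε ^ 2 := by
        have h4 : ((Finset.univ.filter (fun j : Fin (m ^ 2) => (i : ℕ) + m = (j : ℕ)
          ∨ (j : ℕ) + m = (i : ℕ) ∨ (i : ℕ) + 1 = (j : ℕ) ∨ (j : ℕ) + 1 = (i : ℕ))).card : ℝ) ≤ 4 := by
          exact_mod_cast nbr_card i
        nlinarith [sq_nonneg ε]

lemma fd_quad {m : ℕ} {ε b₀ : ℝ} (x : Fin (m ^ 2) → ℝ) :
    (1 / (m + 1 : ℝ)) ^ 2 * b₀ * ∑ i, x i ^ 2 ≤ x ⬝ᵥ (fdMatrix m ε b₀).mulVec x := by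
  have hdiag : ∀ i : Fin (m ^ 2), fdMatrix m ε b₀ i i
      = 4 * ε ^ 2 + (1 / (m + 1 : ℝ)) ^ 2 * b₀ := by
    intro i; simp [fdMatrix]
  have hrow_split : ∀ i : Fin (m ^ 2), ((fdMatrix m ε b₀).mulVec x) i
      = fdMatrix m ε b₀ i i * x i + ∑ j, fdOff m ε b₀ i j * x j := by
    intro i
    have hterm : ∀ j : Fin (m ^ 2), fdMatrix m ε b₀ i j * x j
        = (if i = j then fdMatrix m ε b₀ i i * x i else 0) + fdOff m ε b₀ i j * x j := by
      intro j
      by_cases h : i = j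
      · simp [fdOff, h]
      · simp [fdOff, h]
    rw [show ((fdMatrix m ε b₀).mulVec x) i = ∑ j, fdMatrix m ε b₀ i j * x j from rfl,
      Finset.sum_congr rfl fun j _ => hterm j, Finset.sum_add_distrib,
      Finset.sum_ite_eq, if_pos (Finset.mem_univ i)]
  have hsplit : x ⬝ᵥ (fdMatrix m ε b₀).mulVec x
      = ∑ i, fdMatrix m ε b₀ i i * x i ^ 2 + ∑ i, ∑ j, x i * (fdOff m ε b₀ i j * x j) := by
    rw [show x ⬝ᵥ (fdMatrix m ε b₀).mulVec x = ∑ i, x i * ((fdMatrix m ε b₀).mulVec x) i from rfl]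
    simp_rw [hrow_split, mul_add, Finset.sum_add_distrib, Finset.mul_sum]
    congr 1
    exact Finset.sum_congr rfl fun i _ => by ring
  have hbound : ∀ i j, -( |fdOff m ε b₀ i j| * (x i ^ 2 + x j ^ 2) / 2)
      ≤ x i * (fdOff m ε b₀ i j * x j) := by
    intro i j
    have habs : |x i * x j| ≤ (x i ^ 2 + x j ^ 2) / 2 := by
      have h2 := two_mul_le_add_sq (|x i|) (|x j|)
      rw [abs_mul]
      simp only [sq_abs] at h2
      nlinarith [abs_nonneg (x i), abs_nonneg (x j)]
    have h1 : |x i * (fdOff m ε b₀ i j * x j)| ≤ |fdOff m ε b₀ i j| * (x i ^ 2 + x j ^ 2) / 2 := by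
      calc |x i * (fdOff m ε b₀ i j * x j)| = |fdOff m ε b₀ i j| * |x i * x j| := by
            rw [abs_mul, abs_mul, abs_mul]; ring
        _ ≤ |fdOff m ε b₀ i j| * ((x i ^ 2 + x j ^ 2) / 2) :=
            mul_le_mul_of_nonneg_left habs (abs_nonneg _)
        _ = |fdOff m ε b₀ i j| * (x i ^ 2 + x j ^ 2) / 2 := by ring
    linarith [neg_abs_le (x i * (fdOff m ε b₀ i j * x j))]
  have hswap : ∑ i, ∑ j, |fdOff m ε b₀ i j| * x j ^ 2 = ∑ i, ∑ j, |fdOff m ε b₀ i j| * x i ^ 2 := by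
    rw [Finset.sum_comm]
    exact Finset.sum_congr rfl fun i _ => Finset.sum_congr rfl fun j _ => by rw [fdOff_symm]
  have step2 : ∑ i, ∑ j, |fdOff m ε b₀ i j| * (x i ^ 2 + x j ^ 2) / 2
      ≤ ∑ i, 4 * ε ^ 2 * x i ^ 2 := by
    have expand : ∑ i, ∑ j, |fdOff m ε b₀ i j| * (x i ^ 2 + x j ^ 2) / 2
        = ∑ i, ∑ j, |fdOff m ε b₀ i j| * x i ^ 2 := by
      have e : ∀ i j : Fin (m ^ 2), |fdOff m ε b₀ i j| * (x i ^ 2 + x j ^ 2) / 2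
          = |fdOff m ε b₀ i j| * x i ^ 2 / 2 + |fdOff m ε b₀ i j| * x j ^ 2 / 2 :=
        fun i j => by ring
      simp_rw [e, Finset.sum_add_distrib, ← Finset.sum_div]
      rw [hswap]
      ring
    rw [expand]
    refine Finset.sum_le_sum fun i _ => ?_
    calc ∑ j, |fdOff m ε b₀ i j| * x i ^ 2 = (∑ j, |fdOff m ε b₀ i j|) * x i ^ 2 := by
          rw [Finset.sum_mul]
      _ ≤ 4 * ε ^ 2 * x i ^ 2 := mul_le_mul_of_nonneg_right (fd_row_sum b₀ i) (sq_nonneg _)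
  have hsum2 : -(∑ i, 4 * ε ^ 2 * x i ^ 2) ≤ ∑ i, ∑ j, x i * (fdOff m ε b₀ i j * x j) := by
    have step1 : ∑ i, ∑ j, -( |fdOff m ε b₀ i j| * (x i ^ 2 + x j ^ 2) / 2)
        ≤ ∑ i, ∑ j, x i * (fdOff m ε b₀ i j * x j) :=
      Finset.sum_le_sum fun i _ => Finset.sum_le_sum fun j _ => hbound i j
    have : ∑ i, ∑ j, -( |fdOff m ε b₀ i j| * (x i ^ 2 + x j ^ 2) / 2)
        = -(∑ i, ∑ j, |fdOff m ε b₀ i j| * (x i ^ 2 + x j ^ 2) / 2) := by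
      simp [Finset.sum_neg_distrib]
    rw [this] at step1
    linarith
  rw [hsplit]
  have hd : ∑ i, fdMatrix m ε b₀ i i * x i ^ 2
      = ∑ i, 4 * ε ^ 2 * x i ^ 2 + (1 / (m + 1 : ℝ)) ^ 2 * b₀ * ∑ i, x i ^ 2 := by
    rw [Finset.mul_sum, ← Finset.sum_add_distrib]
    exact Finset.sum_congr rfl fun i _ => by rw [hdiag]; ring
  rw [hd]
  linarith

theorem stmt_8 (m : ℕ) (hm : 2 ≤ m) (ε b₀ : ℝ) (hb₀ : 0 < b₀)
    (hε : 0 < ε) (hεh : ε ≤ 1 / (m + 1 : ℝ))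
    (L : Matrix (Fin (m ^ 2)) (Fin (m ^ 2)) ℝ)
    (hL_tri : ∀ i j : Fin (m ^ 2), i < j → L i j = 0)
    (hL_diag : ∀ i : Fin (m ^ 2), 0 < L i i)
    (hL_fac : fdMatrix m ε b₀ = L * L.transpose) :
    ∀ r : Fin (m ^ 2),
      (1 / (m + 1 : ℝ)) * Real.sqrt b₀ ≤ L r r ∧
      L r r ≤ (1 / (m + 1 : ℝ)) * Real.sqrt (4 + b₀) := by
  intro r
  have hh : (0 : ℝ) < 1 / (m + 1 : ℝ) := by positivity
  have hAdiag : fdMatrix m ε b₀ r r = 4 * ε ^ 2 + (1 / (m + 1 : ℝ)) ^ 2 * b₀ := by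
    simp [fdMatrix]
  have hsum : fdMatrix m ε b₀ r r = ∑ j, L r j ^ 2 := by
    rw [hL_fac]
    simp [Matrix.mul_apply, sq]
  -- upper bound
  have hε2 : ε ^ 2 ≤ (1 / (m + 1 : ℝ)) ^ 2 := by nlinarith
  have hup2 : L r r ^ 2 ≤ (1 / (m + 1 : ℝ)) ^ 2 * (4 + b₀) := by
    have h1 : L r r ^ 2 ≤ ∑ j, L r j ^ 2 :=
      Finset.single_le_sum (f := fun j => L r j ^ 2) (fun j _ => sq_nonneg _) (Finset.mem_univ r)
    rw [← hsum, hAdiag] at h1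
    nlinarith
  have hupper : L r r ≤ (1 / (m + 1 : ℝ)) * Real.sqrt (4 + b₀) := by
    have h2 := Real.sqrt_le_sqrt hup2
    rw [Real.sqrt_sq (hL_diag r).le, Real.sqrt_mul (sq_nonneg _), Real.sqrt_sq hh.le] at h2
    exact h2
  -- lower bound
  have hLt : L.transpose.BlockTriangular id := fun i j hij => hL_tri j i hij
  have hdetL : L.transpose.det = ∏ i, L i i := Matrix.det_of_upperTriangular hLt
  have hdetpos : 0 < ∏ i, L i i := Finset.prod_pos fun i _ => hL_diag i
  have hunit : IsUnit L.transpose.det := by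
    rw [hdetL]; exact isUnit_iff_ne_zero.mpr hdetpos.ne'
  set x := (L.transpose)⁻¹.mulVec (Pi.single r (L r r)) with hxdef
  have hx : L.transpose.mulVec x = Pi.single r (L r r) := by
    rw [hxdef, Matrix.mulVec_mulVec, Matrix.mul_nonsing_inv _ hunit, Matrix.one_mulVec]
  haveI := L.transpose.invertibleOfIsUnitDet hunit
  have hinvtri : (L.transpose)⁻¹.BlockTriangular id :=
    Matrix.blockTriangular_inv_of_blockTriangular hLt
  have hxval : ∀ j : Fin (m ^ 2), x j = (L.transpose)⁻¹ j r * L r r := by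
    intro j
    show ((L.transpose)⁻¹ *ᵥ Pi.single r (L r r)) j = _
    rw [Matrix.mulVec_single]
    rfl
  have hxzero : ∀ j : Fin (m ^ 2), r < j → x j = 0 := by
    intro j hrj
    rw [hxval j, hinvtri hrj, zero_mul]
  have hxr : x r = 1 := by
    have h0 := congrFun hx r
    have h1 : L.transpose.mulVec x r = ∑ j, L j r * x j := rfl
    have h2 : (Pi.single r (L r r) : Fin (m ^ 2) → ℝ) r = L r r := Pi.single_eq_same r _
    have h3 : ∑ j, L j r * x j = L r r * x r := by
      rw [Finset.sum_eq_single r]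
      · intro j _ hj
        rcases lt_or_gt_of_ne hj with h | h
        · rw [hL_tri j r h, zero_mul]
        · rw [hxzero j h, mul_zero]
      · intro h; exact absurd (Finset.mem_univ r) h
    rw [h1, h2, h3] at h0
    have := mul_left_cancel₀ (hL_diag r).ne' (h0.trans (mul_one (L r r)).symm)
    exact this
  have hquadval : x ⬝ᵥ (fdMatrix m ε b₀).mulVec x = L r r ^ 2 := by
    rw [hL_fac, ← Matrix.mulVec_mulVec, Matrix.dotProduct_mulVec, ← Matrix.mulVec_transpose, hx]
    simp [dotProduct, Pi.single_apply, sq]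
  have hlow := fd_quad (m := m) (ε := ε) (b₀ := b₀) x
  rw [hquadval] at hlow
  have hxsq : (1 : ℝ) ≤ ∑ i, x i ^ 2 := by
    have h4 := Finset.single_le_sum (f := fun i => x i ^ 2)
      (fun i _ => sq_nonneg _) (Finset.mem_univ r)
    simpa [hxr] using h4
  have hlow2 : (1 / (m + 1 : ℝ)) ^ 2 * b₀ ≤ L r r ^ 2 := by nlinarith
  have hlower : (1 / (m + 1 : ℝ)) * Real.sqrt b₀ ≤ L r r := by
    have h5 := Real.sqrt_le_sqrt hlow2
    rw [Real.sqrt_sq (hL_diag r).le, Real.sqrt_mul (sq_nonneg _), Real.sqrt_sq hh.le] at h5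
    exact h5
  exact ⟨hlower, hupper⟩
end
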